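/- arXiv:2010.07357 — 4 statements merged into one kernel-verified Lean document; each statement's English description precedes it below -/
import Mathlib

section
/- With f_{i,j} and g_{i,j} as defined in the context, Σ_{u ∈ W_N} det[f_{i,j}(u_j)]_{1≤i,j≤N} · det[g_{j,i}(−u_j)]_{1≤i,j≤N} = Σ_{u ∈ W_N} det[f_{i,0}(u_j)]_{1≤i,j≤N} · det[g_{0,i}(−u_j)]_{1≤i,j≤N}, where in the second determinant on each side the (i,j) entry is g_{j,i}(−u_j) (respectively g_{0,i}(−u_j)). Both sums have only finitely many nonzero terms. -/
/-- `f_{i,j}(u)` of Lemma 2.3: a contour integral over `|z| = R₁`. -/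
noncomputable def fInt (a b : ℕ → ℝ) (x : ℕ → ℤ) (m : ℕ) (R₁ : ℝ)
    (i j : ℕ) (u : ℤ) : ℂ :=
  (2 * (Real.pi : ℂ) * Complex.I)⁻¹ *
    ∮ z in C(0, R₁),
      z⁻¹ * z ^ u * (z * (b i : ℂ)) ^ (-(x i))
        * ((∏ k ∈ Finset.Icc 1 j, (z - ((b k : ℂ))⁻¹))
            / ∏ k ∈ Finset.Icc 1 i, (z - ((b k : ℂ))⁻¹))
        * ∏ k ∈ Finset.Icc 1 (m - 1), (1 - (a k : ℂ) / z)⁻¹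

/-- `g_{i,j}(u)` of Lemma 2.3: a contour integral over `|w| = R₂`. -/
noncomputable def gInt (a b : ℕ → ℝ) (y : ℕ → ℤ) (m : ℕ) (R₂ : ℝ)
    (i j : ℕ) (u : ℤ) : ℂ :=
  (2 * (Real.pi : ℂ) * Complex.I)⁻¹ *
    ∮ w in C(0, R₂),
      w ^ u * (w * (b j : ℂ)) ^ (y j)
        * ((∏ k ∈ Finset.Icc 1 j, (w - ((b k : ℂ))⁻¹))
            / ∏ k ∈ Finset.Icc 1 i, (w - ((b k : ℂ))⁻¹))
        * (w - (a m : ℂ))⁻¹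


namespace SBP

variable {N : ℕ}

/-- the finite set of monotone tuples with entries in `[α, β]`. -/
noncomputable def mset (N : ℕ) (α β : ℤ) : Finset (Fin N → ℤ) :=
  (Fintype.piFinset fun _ : Fin N => Finset.Icc α β).filter
    (fun u => ∀ k l : Fin N, k ≤ l → u k ≤ u l)

lemma mem_mset {α β : ℤ} {u : Fin N → ℤ} :
    u ∈ mset N α β ↔ (∀ k, α ≤ u k ∧ u k ≤ β) ∧ Monotone u := by
  simp [mset, Fintype.mem_piFinset, Finset.mem_Icc, Monotone]

/-- the summand: product of the two determinants with superscript pattern `σ`. -/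
noncomputable def DD (F G : ℕ → ℕ → ℤ → ℂ) (σ : Fin N → ℕ) (u : Fin N → ℤ) : ℂ :=
  (Matrix.of fun i j : Fin N => F (i.1 + 1) (σ j) (u j)).det *
    (Matrix.of fun i j : Fin N => G (σ j) (i.1 + 1) (-(u j))).det

lemma det_col_sub (M : Matrix (Fin N) (Fin N) ℂ) (j : Fin N) (cc : ℂ) (X Y : Fin N → ℂ) :
    Matrix.det (M.updateCol j (fun i => X i - cc * Y i))
      = Matrix.det (M.updateCol j X) - cc * Matrix.det (M.updateCol j Y) := by
  have h : (fun i => X i - cc * Y i) = X + ((-cc) • Y) := by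
    funext i; simp [smul_eq_mul]; ring
  rw [h, Matrix.det_updateCol_add, Matrix.det_updateCol_smul]; ring

variable (F G : ℕ → ℕ → ℤ → ℂ) (c : ℕ → ℂ) (α β : ℤ)

theorem step
    (hF : ∀ i σ u, 1 ≤ i → i ≤ N → 1 ≤ σ → σ ≤ N →
      F i σ u = F i (σ - 1) (u + 1) - c σ * F i (σ - 1) u)
    (hG : ∀ σ i u, 1 ≤ σ → σ ≤ N → 1 ≤ i → i ≤ N →
      G (σ - 1) i u = G σ i (u + 1) - c σ * G σ i u)
    (hFv : ∀ i σ u, 1 ≤ i → i ≤ N → σ ≤ N → u ≤ α → F i σ u = 0)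
    (hGv : ∀ σ i u, σ ≤ N → 1 ≤ i → i ≤ N → β ≤ u → G σ i (-u) = 0)
    (σ : Fin N → ℕ) (j : Fin N) (h1 : 1 ≤ σ j) (h2 : σ j ≤ N)
    (hlow : ∀ k : Fin N, k.1 + 1 = j.1 → σ k = σ j - 1)
    (hup : ∀ k : Fin N, k.1 = j.1 + 1 → σ k = σ j) :
    ∑ u ∈ mset N α β, DD F G σ u
      = ∑ u ∈ mset N α β, DD F G (Function.update σ j (σ j - 1)) u := by
  classical
  set S := mset N α β with hS
  set σ' := Function.update σ j (σ j - 1) with hσ'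
  set cc := c (σ j) with hcc
  have hσ'j : σ' j = σ j - 1 := by rw [hσ']; simp
  have hσ'k : ∀ k, k ≠ j → σ' k = σ k := by
    intro k hk; rw [hσ']; exact Function.update_of_ne hk _ _
  set A' : (Fin N → ℤ) → ℂ :=
    fun v => (Matrix.of fun i k : Fin N => F (i.1 + 1) (σ' k) (v k)).det with hA'
  set B : (Fin N → ℤ) → ℂ :=
    fun v => (Matrix.of fun i k : Fin N => G (σ k) (i.1 + 1) (-(v k))).det with hB
  set B' : (Fin N → ℤ) → ℂ :=
    fun v => (Matrix.of fun i k : Fin N => G (σ' k) (i.1 + 1) (-(v k))).det with hB'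
  -- pointwise lemma 1
  have key1 : ∀ u : Fin N → ℤ,
      (Matrix.of fun i k : Fin N => F (i.1 + 1) (σ k) (u k)).det
        = A' (Function.update u j (u j + 1)) - cc * A' u := by
    intro u
    set M : Matrix (Fin N) (Fin N) ℂ :=
      Matrix.of fun i k : Fin N => F (i.1 + 1) (σ' k) (u k) with hM
    have e1 : (Matrix.of fun i k : Fin N => F (i.1 + 1) (σ k) (u k))
        = M.updateCol j (fun i => F (i.1 + 1) (σ j) (u j)) := by
      ext i k
      rw [Matrix.updateCol_apply]
      by_cases hk : k = j
      · subst hk; simp [hM]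
      · simp [hk, hM, hσ'k k hk]
    have e2 : A' (Function.update u j (u j + 1))
        = (M.updateCol j (fun i => F (i.1 + 1) (σ j - 1) (u j + 1))).det := by
      simp only [hA']
      congr 1
      ext i k
      rw [Matrix.updateCol_apply]
      by_cases hk : k = j
      · subst hk; simp [hσ'j]
      · simp [hk, hM, Function.update_of_ne hk]
    have e3 : A' u = (M.updateCol j (fun i => F (i.1 + 1) (σ j - 1) (u j))).det := by
      simp only [hA']
      congr 1
      ext i k
      rw [Matrix.updateCol_apply]
      by_cases hk : k = j
      · subst hk; simp [hM, hσ'j]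
      · simp [hk, hM]
    rw [e1, e2, e3]
    have e4 : (fun i : Fin N => F (i.1 + 1) (σ j) (u j))
        = fun i : Fin N => F (i.1 + 1) (σ j - 1) (u j + 1)
            - cc * F (i.1 + 1) (σ j - 1) (u j) := by
      funext i
      exact hF (i.1 + 1) (σ j) (u j) (Nat.le_add_left 1 i.1) (Nat.succ_le_of_lt i.2) h1 h2
    rw [e4, det_col_sub]
  -- pointwise lemma 2
  have key2 : ∀ v : Fin N → ℤ,
      B (Function.update v j (v j - 1)) - cc * B v = B' v := by
    intro v
    set M : Matrix (Fin N) (Fin N) ℂ :=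
      Matrix.of fun i k : Fin N => G (σ' k) (i.1 + 1) (-(v k)) with hM
    have e1 : B (Function.update v j (v j - 1))
        = (M.updateCol j (fun i => G (σ j) (i.1 + 1) (-(v j) + 1))).det := by
      simp only [hB]
      congr 1
      ext i k
      rw [Matrix.updateCol_apply]
      by_cases hk : k = j
      · subst hk; simp [hM]; ring_nf
      · simp [hk, hM, hσ'k k hk, Function.update_of_ne hk]
    have e2 : B v = (M.updateCol j (fun i => G (σ j) (i.1 + 1) (-(v j)))).det := by
      simp only [hB]
      congr 1
      ext i k
      rw [Matrix.updateCol_apply]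
      by_cases hk : k = j
      · subst hk; simp [hM]
      · simp [hk, hM, hσ'k k hk]
    have e3 : B' v = (M.updateCol j (fun i => G (σ j - 1) (i.1 + 1) (-(v j)))).det := by
      simp only [hB']
      congr 1
      ext i k
      rw [Matrix.updateCol_apply]
      by_cases hk : k = j
      · subst hk; simp [hM, hσ'j]
      · simp [hk, hM]
    rw [e1, e2, e3]
    have e4 : (fun i : Fin N => G (σ j - 1) (i.1 + 1) (-(v j)))
        = fun i : Fin N => G (σ j) (i.1 + 1) (-(v j) + 1)
            - cc * G (σ j) (i.1 + 1) (-(v j)) := by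
      funext i
      exact hG (σ j) (i.1 + 1) (-(v j)) h1 h2 (Nat.le_add_left 1 i.1) (Nat.succ_le_of_lt i.2)
    rw [e4, det_col_sub]
  -- the shift maps
  set sh : (Fin N → ℤ) → (Fin N → ℤ) := fun u => Function.update u j (u j + 1) with hsh
  set sh' : (Fin N → ℤ) → (Fin N → ℤ) := fun v => Function.update v j (v j - 1) with hsh'
  have hshj : ∀ u, sh u j = u j + 1 := by intro u; simp [hsh]
  have hshk : ∀ u k, k ≠ j → sh u k = u k := by
    intro u k hk; simp [hsh, Function.update_of_ne hk]
  have hsh'j : ∀ u, sh' u j = u j - 1 := by intro u; simp [hsh']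
  have hsh'k : ∀ u k, k ≠ j → sh' u k = u k := by
    intro u k hk; simp [hsh', Function.update_of_ne hk]
  have hshsh' : ∀ u, sh' (sh u) = u := by
    intro u
    funext k
    by_cases hk : k = j
    · subst hk; rw [hsh'j, hshj]; ring
    · rw [hsh'k _ _ hk, hshk _ _ hk]
  have hsh'sh : ∀ v, sh (sh' v) = v := by
    intro v
    funext k
    by_cases hk : k = j
    · subst hk; rw [hshj, hsh'j]; ring
    · rw [hshk _ _ hk, hsh'k _ _ hk]
  set φ : (Fin N → ℤ) → ℂ := fun v => A' v * B (sh' v) with hφ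
  have himage : ∀ v, v ∈ S.image sh ↔ sh' v ∈ S := by
    intro v
    constructor
    · rintro hv
      obtain ⟨u, hu, rfl⟩ := Finset.mem_image.mp hv
      rwa [hshsh']
    · intro h
      exact Finset.mem_image.mpr ⟨sh' v, h, hsh'sh v⟩
  -- case (a) vanishing
  have caseA : ∀ v ∈ S, v ∉ S.image sh → φ v = 0 := by
    intro v hv hvim
    obtain ⟨hvbox, hvmono⟩ := mem_mset.mp hv
    have hwS : sh' v ∉ S := fun h => hvim ((himage v).mpr h)
    have hfirst : A' v = 0 := by
      by_cases hα : v j ≤ α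
      · refine Matrix.det_eq_zero_of_column_eq_zero j ?_
        intro i
        show F (i.1 + 1) (σ' j) (v j) = 0
        rw [hσ'j]
        exact hFv _ _ _ (Nat.le_add_left 1 i.1) (Nat.succ_le_of_lt i.2)
          (le_trans (Nat.sub_le _ _) h2) hα
      · -- the box conditions hold for sh' v, so monotonicity must fail
        push_neg at hα
        have hwbox : ∀ k, α ≤ sh' v k ∧ sh' v k ≤ β := by
          intro k
          by_cases hk : k = j
          · rw [hk, hsh'j]
            exact ⟨by omega, by have := (hvbox j).2; omega⟩
          · rw [hsh'k _ _ hk]; exact hvbox k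
        have hwmono : ¬ Monotone (sh' v) := by
          intro hmono
          exact hwS (mem_mset.mpr ⟨hwbox, hmono⟩)
        have hex : ∃ k l : Fin N, k ≤ l ∧ sh' v l < sh' v k := by
          by_contra hc
          push_neg at hc
          exact hwmono fun k l hkl => hc k l hkl
        obtain ⟨k, l, hkl, hgt⟩ := hex
        have hkj : k ≠ j := by
          intro hkj
          have hlj : l ≠ j := by
            intro h
            rw [hkj, h] at hgt
            exact lt_irrefl _ hgt
          rw [hsh'k _ _ hlj, hkj, hsh'j] at hgt
          rw [hkj] at hkl
          have := hvmono hkl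
          omega
        have hlj : l = j := by
          by_contra hlj
          rw [hsh'k _ _ hlj, hsh'k _ _ hkj] at hgt
          exact absurd (hvmono hkl) (not_le.mpr hgt)
        subst hlj
        rw [hsh'j, hsh'k _ _ hkj] at hgt
        have hklt : k < l := lt_of_le_of_ne hkl hkj
        have hvk : v k = v l := le_antisymm (hvmono hkl) (by omega)
        have hl1 : 1 ≤ l.1 := by
          have := hklt
          omega
        set k₀ : Fin N := ⟨l.1 - 1, lt_of_le_of_lt (Nat.sub_le _ _) l.2⟩ with hk₀
        have hk₀l : k₀ ≠ l := by
          intro h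
          have : l.1 - 1 = l.1 := congrArg Fin.val h
          omega
        have hkk₀ : k ≤ k₀ := by
          have : k.1 ≤ l.1 - 1 := by omega
          exact this
        have hk₀le : k₀ ≤ l := by
          show l.1 - 1 ≤ l.1
          omega
        have hvk₀ : v k₀ = v l :=
          le_antisymm (hvmono hk₀le) (hvk ▸ hvmono hkk₀)
        have hσk₀ : σ k₀ = σ l - 1 := hlow k₀ (by show l.1 - 1 + 1 = l.1; omega)
        refine Matrix.det_zero_of_column_eq hk₀l ?_
        intro i
        show F (i.1 + 1) (σ' k₀) (v k₀) = F (i.1 + 1) (σ' l) (v l)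
        rw [hσ'k _ hk₀l, hσk₀, hσ'j, hvk₀]
    rw [hφ]
    simp [hfirst]
  -- case (b) vanishing
  have caseB : ∀ v ∈ S.image sh, v ∉ S → φ v = 0 := by
    intro v hvim hvS
    have hwS : sh' v ∈ S := (himage v).mp hvim
    obtain ⟨hwbox, hwmono⟩ := mem_mset.mp hwS
    have hvj : v j = sh' v j + 1 := by rw [hsh'j]; ring
    have hvk : ∀ k, k ≠ j → v k = sh' v k := fun k hk => (hsh'k _ _ hk).symm
    have hsecond : B (sh' v) = 0 := by
      by_cases hβ : β ≤ sh' v j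
      · refine Matrix.det_eq_zero_of_column_eq_zero j ?_
        intro i
        show G (σ j) (i.1 + 1) (-(sh' v j)) = 0
        exact hGv _ _ _ h2 (Nat.le_add_left 1 i.1) (Nat.succ_le_of_lt i.2) hβ
      · push_neg at hβ
        have hvbox : ∀ k, α ≤ v k ∧ v k ≤ β := by
          intro k
          by_cases hk : k = j
          · rw [hk, hvj]
            exact ⟨by have := (hwbox j).1; omega, by omega⟩
          · rw [hvk _ hk]; exact hwbox k
        have hvmono : ¬ Monotone v := by
          intro hmono
          exact hvS (mem_mset.mpr ⟨hvbox, hmono⟩)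
        have hex : ∃ k l : Fin N, k ≤ l ∧ v l < v k := by
          by_contra hc
          push_neg at hc
          exact hvmono fun k l hkl => hc k l hkl
        obtain ⟨k, l, hkl, hgt⟩ := hex
        have hkj : k = j := by
          by_contra hkj
          have hlj : l ≠ j := by
            intro h
            rw [h] at hgt hkl
            rw [hvj, hvk _ hkj] at hgt
            have := hwmono hkl
            omega
          rw [hvk _ hkj, hvk _ hlj] at hgt
          exact absurd (hwmono hkl) (not_le.mpr hgt)
        subst hkj
        have hlj : l ≠ k := by rintro rfl; exact lt_irrefl _ hgt
        have hklt : k < l := lt_of_le_of_ne hkl (Ne.symm hlj)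
        rw [hvj, hvk _ hlj] at hgt
        have hwl : sh' v l = sh' v k := le_antisymm (by omega) (hwmono hkl)
        have hl1 : k.1 + 1 < N := by
          have h1 := hklt
          have h2 := l.2
          omega
        set l₀ : Fin N := ⟨k.1 + 1, hl1⟩ with hl₀
        have hl₀k : l₀ ≠ k := by
          intro h
          have : k.1 + 1 = k.1 := congrArg Fin.val h
          omega
        have hkl₀ : k ≤ l₀ := by
          show k.1 ≤ k.1 + 1
          omega
        have hl₀l : l₀ ≤ l := by
          show k.1 + 1 ≤ l.1
          omega
        have hwl₀ : sh' v l₀ = sh' v k :=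
          le_antisymm (hwl ▸ hwmono hl₀l) (hwmono hkl₀)
        have hσl₀ : σ l₀ = σ k := hup l₀ rfl
        refine Matrix.det_zero_of_column_eq hl₀k ?_
        intro i
        show G (σ l₀) (i.1 + 1) (-(sh' v l₀)) = G (σ k) (i.1 + 1) (-(sh' v k))
        rw [hσl₀, hwl₀]
    rw [hφ]
    simp [hsecond]
  -- reindexing
  have inj : ∀ u₁ ∈ S, ∀ u₂ ∈ S, sh u₁ = sh u₂ → u₁ = u₂ := by
    intro u₁ _ u₂ _ h
    have := congrArg sh' h
    rwa [hshsh', hshsh'] at this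
  have claim3a : ∑ u ∈ S, A' (sh u) * B u = ∑ v ∈ S.image sh, φ v := by
    rw [Finset.sum_image inj]
    refine Finset.sum_congr rfl fun u _ => ?_
    rw [hφ]
    simp only []
    rw [hshsh']
  have claim3b : ∑ v ∈ S.image sh, φ v = ∑ v ∈ S, φ v := by
    have h1 : ∑ v ∈ S.image sh, φ v = ∑ v ∈ S ∪ S.image sh, φ v :=
      Finset.sum_subset Finset.subset_union_right
        (fun v hv hvim => caseA v (by
          rcases Finset.mem_union.mp hv with h | h
          · exact h
          · exact absurd h hvim) hvim)
    have h2 : ∑ v ∈ S, φ v = ∑ v ∈ S ∪ S.image sh, φ v :=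
      Finset.sum_subset Finset.subset_union_left
        (fun v hv hvS => caseB v (by
          rcases Finset.mem_union.mp hv with h | h
          · exact absurd h hvS
          · exact h) hvS)
    rw [h1, h2]
  -- assembly
  have expand : ∑ u ∈ S, DD F G σ u
      = ∑ u ∈ S, A' (sh u) * B u - cc * ∑ u ∈ S, A' u * B u := by
    rw [Finset.mul_sum, ← Finset.sum_sub_distrib]
    refine Finset.sum_congr rfl fun u _ => ?_
    show (Matrix.of fun i k : Fin N => F (i.1 + 1) (σ k) (u k)).det
        * (Matrix.of fun i k : Fin N => G (σ k) (i.1 + 1) (-(u k))).det = _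
    rw [key1 u]
    ring
  rw [expand, claim3a, claim3b]
  rw [Finset.mul_sum, ← Finset.sum_sub_distrib]
  refine Finset.sum_congr rfl fun v _ => ?_
  show A' v * B (sh' v) - cc * (A' v * B v) = _
  have : A' v * B (sh' v) - cc * (A' v * B v) = A' v * (B (sh' v) - cc * B v) := by ring
  rw [this]
  have hBs : B (sh' v) = B (Function.update v j (v j - 1)) := by rw [hsh']
  rw [hBs, key2 v]
  show A' v * B' v = DD F G σ' v
  rw [DD, hA', hB']


/-- intermediate superscript patterns -/
def stp (N p j : ℕ) : Fin N → ℕ :=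
  fun k => if k.1 < j then min (k.1 + 1) (p - 1) else min (k.1 + 1) p

lemma chain_inner
    (hF : ∀ i σ u, 1 ≤ i → i ≤ N → 1 ≤ σ → σ ≤ N →
      F i σ u = F i (σ - 1) (u + 1) - c σ * F i (σ - 1) u)
    (hG : ∀ σ i u, 1 ≤ σ → σ ≤ N → 1 ≤ i → i ≤ N →
      G (σ - 1) i u = G σ i (u + 1) - c σ * G σ i u)
    (hFv : ∀ i σ u, 1 ≤ i → i ≤ N → σ ≤ N → u ≤ α → F i σ u = 0)
    (hGv : ∀ σ i u, σ ≤ N → 1 ≤ i → i ≤ N → β ≤ u → G σ i (-u) = 0)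
    (p : ℕ) (hp1 : 1 ≤ p) (hpN : p ≤ N) :
    ∑ u ∈ mset N α β, DD F G (fun k => min (k.1 + 1) p) u
      = ∑ u ∈ mset N α β, DD F G (fun k => min (k.1 + 1) (p - 1)) u := by
  have hleft : stp N p (p - 1) = fun k : Fin N => min (k.1 + 1) p := by
    funext k
    simp only [stp]
    split
    · next h =>
      rw [min_eq_left (by omega), min_eq_left (by omega)]
    · rfl
  have hright : stp N p N = fun k : Fin N => min (k.1 + 1) (p - 1) := by
    funext k
    simp only [stp, if_pos k.2]
  have main : ∀ jj, p - 1 ≤ jj → jj ≤ N →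
      (∑ u ∈ mset N α β, DD F G (stp N p (p - 1)) u)
        = ∑ u ∈ mset N α β, DD F G (stp N p jj) u := by
    intro jj hjj
    induction jj, hjj using Nat.le_induction with
    | base => intro _; rfl
    | succ n hn ih =>
      intro hn1
      have hnN : n < N := hn1
      rw [ih (by omega)]
      have hσj : stp N p n ⟨n, hnN⟩ = p := by
        simp only [stp]
        rw [if_neg (by omega), min_eq_right (by omega)]
      have hstep := step F G c α β hF hG hFv hGv (stp N p n) ⟨n, hnN⟩
        (by rw [hσj]; exact hp1) (by rw [hσj]; exact hpN)
        (by
          intro k hk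
          have hk' : k.1 + 1 = n := hk
          simp only [stp]
          rw [if_pos (by omega), if_neg (lt_irrefl n), hk',
            min_eq_right (by omega : p - 1 ≤ n), min_eq_right (by omega : p ≤ n + 1)])
        (by
          intro k hk
          have hk' : k.1 = n + 1 := hk
          simp only [stp]
          rw [if_neg (by omega), if_neg (lt_irrefl n), hk',
            min_eq_right (by omega : p ≤ n + 1 + 1), min_eq_right (by omega : p ≤ n + 1)])
      rw [hstep]
      congr 1
      funext u
      congr 1
      funext k
      by_cases hk : k = (⟨n, hnN⟩ : Fin N)
      · subst hk
        rw [Function.update_self, hσj]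
        simp only [stp]
        rw [if_pos (by omega), min_eq_right (by omega)]
      · rw [Function.update_of_ne hk]
        have hkn : k.1 ≠ n := fun h => hk (Fin.ext h)
        simp only [stp]
        by_cases hlt : k.1 < n
        · rw [if_pos hlt, if_pos (by omega)]
        · rw [if_neg hlt, if_neg (by omega)]
  have := main N (by omega) le_rfl
  rw [hleft, hright] at this
  exact this

lemma chain
    (hF : ∀ i σ u, 1 ≤ i → i ≤ N → 1 ≤ σ → σ ≤ N →
      F i σ u = F i (σ - 1) (u + 1) - c σ * F i (σ - 1) u)
    (hG : ∀ σ i u, 1 ≤ σ → σ ≤ N → 1 ≤ i → i ≤ N →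
      G (σ - 1) i u = G σ i (u + 1) - c σ * G σ i u)
    (hFv : ∀ i σ u, 1 ≤ i → i ≤ N → σ ≤ N → u ≤ α → F i σ u = 0)
    (hGv : ∀ σ i u, σ ≤ N → 1 ≤ i → i ≤ N → β ≤ u → G σ i (-u) = 0) :
    ∑ u ∈ mset N α β, DD F G (fun k => k.1 + 1) u
      = ∑ u ∈ mset N α β, DD F G (fun _ => 0) u := by
  have main : ∀ d, d ≤ N →
      ∑ u ∈ mset N α β, DD F G (fun k => min (k.1 + 1) N) u
        = ∑ u ∈ mset N α β, DD F G (fun k => min (k.1 + 1) (N - d)) u := by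
    intro d
    induction d with
    | zero => intro _; rfl
    | succ d ih =>
      intro hd
      rw [ih (by omega)]
      have h := chain_inner F G c α β hF hG hFv hGv (N - d) (by omega) (by omega)
      rw [Nat.sub_sub] at h
      exact h
  have h := main N le_rfl
  have e1 : (fun k : Fin N => min (k.1 + 1) N) = fun k : Fin N => k.1 + 1 := by
    funext k; exact min_eq_left k.2
  have e2 : (fun k : Fin N => min (k.1 + 1) (N - N)) = fun _ : Fin N => 0 := by
    funext k; simp
  rw [e1, e2] at h
  exact h

lemma tsum_eq_msum (σ : Fin N → ℕ) (hσ : ∀ k, σ k ≤ N)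
    (hFv : ∀ i σ u, 1 ≤ i → i ≤ N → σ ≤ N → u ≤ α → F i σ u = 0)
    (hGv : ∀ σ i u, σ ≤ N → 1 ≤ i → i ≤ N → β ≤ u → G σ i (-u) = 0) :
    ∑' u : {u : Fin N → ℤ // Monotone u}, DD F G σ u.1
      = ∑ u ∈ mset N α β, DD F G σ u := by
  classical
  have h1 : ∑' u : {u : Fin N → ℤ // Monotone u}, DD F G σ u.1
      = ∑' u : Fin N → ℤ, Set.indicator {u : Fin N → ℤ | Monotone u} (DD F G σ) u :=
    tsum_subtype {u : Fin N → ℤ | Monotone u} (DD F G σ)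
  rw [h1]
  rw [tsum_eq_sum (s := mset N α β) ?_]
  · refine Finset.sum_congr rfl fun u hu => ?_
    exact Set.indicator_of_mem
      (show u ∈ {u : Fin N → ℤ | Monotone u} from (mem_mset.mp hu).2) _
  · intro u hu
    by_cases hm : Monotone u
    · rw [Set.indicator_of_mem (show u ∈ {u : Fin N → ℤ | Monotone u} from hm)]
      have hbad : ¬ (∀ k, α ≤ u k ∧ u k ≤ β) := fun h => hu (mem_mset.mpr ⟨h, hm⟩)
      push_neg at hbad
      obtain ⟨k, hk⟩ := hbad
      rcases lt_or_ge (u k) α with hlt | hge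
      · have hdet : (Matrix.of fun i j : Fin N => F (i.1 + 1) (σ j) (u j)).det = 0 := by
          refine Matrix.det_eq_zero_of_column_eq_zero k fun i => ?_
          exact hFv _ _ _ (Nat.le_add_left 1 i.1) (Nat.succ_le_of_lt i.2) (hσ k) hlt.le
        rw [DD, hdet, zero_mul]
      · have hβ : β ≤ u k := (hk hge).le
        have hdet : (Matrix.of fun i j : Fin N => G (σ j) (i.1 + 1) (-(u j))).det = 0 := by
          refine Matrix.det_eq_zero_of_column_eq_zero k fun i => ?_
          exact hGv _ _ _ (hσ k) (Nat.le_add_left 1 i.1) (Nat.succ_le_of_lt i.2) hβ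
        rw [DD, hdet, mul_zero]
    · exact Set.indicator_of_notMem
        (show u ∉ {u : Fin N → ℤ | Monotone u} from hm) _

theorem abstract_sbp {N : ℕ} (F G : ℕ → ℕ → ℤ → ℂ) (c : ℕ → ℂ) (α β : ℤ)
    (hF : ∀ i σ u, 1 ≤ i → i ≤ N → 1 ≤ σ → σ ≤ N →
      F i σ u = F i (σ - 1) (u + 1) - c σ * F i (σ - 1) u)
    (hG : ∀ σ i u, 1 ≤ σ → σ ≤ N → 1 ≤ i → i ≤ N →
      G (σ - 1) i u = G σ i (u + 1) - c σ * G σ i u)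
    (hFv : ∀ i σ u, 1 ≤ i → i ≤ N → σ ≤ N → u ≤ α → F i σ u = 0)
    (hGv : ∀ σ i u, σ ≤ N → 1 ≤ i → i ≤ N → β ≤ u → G σ i (-u) = 0) :
    (∑' u : {u : Fin N → ℤ // Monotone u},
        (Matrix.of fun i j : Fin N => F (i.1 + 1) (j.1 + 1) (u.1 j)).det
          * (Matrix.of fun i j : Fin N => G (j.1 + 1) (i.1 + 1) (-(u.1 j))).det)
      = ∑' u : {u : Fin N → ℤ // Monotone u},
          (Matrix.of fun i j : Fin N => F (i.1 + 1) 0 (u.1 j)).det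
            * (Matrix.of fun i j : Fin N => G 0 (i.1 + 1) (-(u.1 j))).det := by
  have e1 : (∑' u : {u : Fin N → ℤ // Monotone u},
        (Matrix.of fun i j : Fin N => F (i.1 + 1) (j.1 + 1) (u.1 j)).det
          * (Matrix.of fun i j : Fin N => G (j.1 + 1) (i.1 + 1) (-(u.1 j))).det)
      = ∑' u : {u : Fin N → ℤ // Monotone u}, DD F G (fun k => k.1 + 1) u.1 := rfl
  have e2 : (∑' u : {u : Fin N → ℤ // Monotone u},
        (Matrix.of fun i j : Fin N => F (i.1 + 1) 0 (u.1 j)).det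
          * (Matrix.of fun i j : Fin N => G 0 (i.1 + 1) (-(u.1 j))).det)
      = ∑' u : {u : Fin N → ℤ // Monotone u}, DD F G (fun _ => 0) u.1 := rfl
  rw [e1, e2,
    tsum_eq_msum F G α β (fun k => k.1 + 1) (fun k => k.2) hFv hGv,
    tsum_eq_msum F G α β (fun _ => 0) (fun _ => Nat.zero_le N) hFv hGv]
  exact chain F G c α β hF hG hFv hGv

end SBP

section Analytic

variable {N : ℕ} (hN : 1 ≤ N) (a b : ℕ → ℝ)
    (ha : ∀ i, 1 ≤ i → 0 ≤ a i ∧ a i ≤ 1)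
    (hb : ∀ j, 1 ≤ j → j ≤ N → 0 < b j ∧ b j ≤ 1)
    (m : ℕ) (hm : 1 ≤ m) (x y : ℕ → ℤ)
    {R₁ R₂ : ℝ}
    (hR₁ : ∀ k, 1 ≤ k → k ≤ N → 1 / b k < R₁)
    (hR₂ : ∀ k, 1 ≤ k → k ≤ N → 1 / b k < R₂)

include hN hb hR₁ in
lemma R₁_gt_one : 1 < R₁ := by
  have h1 := hb 1 le_rfl hN
  have h2 := hR₁ 1 le_rfl hN
  have : (1 : ℝ) ≤ 1 / b 1 := by
    rw [le_div_iff₀ h1.1]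
    simpa using h1.2
  linarith

-- nonvanishing of `z - (b k)⁻¹` on circles of radius `> 1/b k`
lemma sub_binv_ne_zero {R : ℝ} {z : ℂ} (hz : z ∈ Metric.sphere (0 : ℂ) R)
    {k : ℕ} (hbk : 0 < b k) (hRk : 1 / b k < R) : z - ((b k : ℂ))⁻¹ ≠ 0 := by
  rw [sub_ne_zero]
  intro h
  rw [mem_sphere_zero_iff_norm] at hz
  rw [h] at hz
  rw [norm_inv, Complex.norm_real, Real.norm_eq_abs, abs_of_pos hbk] at hz
  rw [← one_div] at hz
  linarith

lemma one_sub_div_ne_zero {R : ℝ} {z : ℂ} (hz : z ∈ Metric.sphere (0 : ℂ) R)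
    {t : ℝ} (ht0 : 0 ≤ t) (ht1 : t ≤ 1) (hR : 1 < R) : 1 - (t : ℂ) / z ≠ 0 := by
  have hz' : ‖z‖ = R := mem_sphere_zero_iff_norm.mp hz
  have hz0 : z ≠ 0 := by
    intro h; rw [h] at hz'; simp at hz'; linarith
  intro h
  have hzt : z = (t : ℂ) := by
    field_simp at h
    linear_combination h
  rw [hzt, Complex.norm_real, Real.norm_eq_abs, abs_of_nonneg ht0] at hz'
  linarith

lemma sub_const_ne_zero {R : ℝ} {z : ℂ} (hz : z ∈ Metric.sphere (0 : ℂ) R)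
    {t : ℝ} (ht0 : 0 ≤ t) (ht1 : t ≤ 1) (hR : 1 < R) : z - (t : ℂ) ≠ 0 := by
  rw [sub_ne_zero]
  intro h
  rw [mem_sphere_zero_iff_norm, h, Complex.norm_real, Real.norm_eq_abs,
    abs_of_nonneg ht0] at hz
  linarith

lemma sphere_ne_zero {R : ℝ} {z : ℂ} (hz : z ∈ Metric.sphere (0 : ℂ) R) (hR : 0 < R) :
    z ≠ 0 := by
  rw [mem_sphere_zero_iff_norm] at hz
  intro h; rw [h] at hz; simp at hz; linarith

include hN ha hb hR₁ in
lemma fCont (i j : ℕ) (hi1 : 1 ≤ i) (hiN : i ≤ N) (hjN : j ≤ N) (u : ℤ) :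
    ContinuousOn (fun z : ℂ =>
      z⁻¹ * z ^ u * (z * (b i : ℂ)) ^ (-(x i))
        * ((∏ k ∈ Finset.Icc 1 j, (z - ((b k : ℂ))⁻¹))
            / ∏ k ∈ Finset.Icc 1 i, (z - ((b k : ℂ))⁻¹))
        * ∏ k ∈ Finset.Icc 1 (m - 1), (1 - (a k : ℂ) / z)⁻¹)
      (Metric.sphere (0 : ℂ) R₁) := by
  have hR1 : 1 < R₁ := R₁_gt_one hN b hb hR₁
  have hR0 : 0 < R₁ := lt_trans one_pos hR1
  have hz0 : ∀ z ∈ Metric.sphere (0 : ℂ) R₁, z ≠ 0 := fun z hz => sphere_ne_zero hz hR0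
  have hbi : ((b i : ℝ) : ℂ) ≠ 0 := by
    simpa using (hb i hi1 hiN).1.ne'
  refine ContinuousOn.mul (ContinuousOn.mul (ContinuousOn.mul (ContinuousOn.mul ?_ ?_) ?_) ?_) ?_
  · exact continuousOn_id.inv₀ hz0
  · intro z hz
    exact (continuousAt_zpow₀ z u (Or.inl (hz0 z hz))).continuousWithinAt
  · intro z hz
    have : ContinuousAt (fun z : ℂ => (z * (b i : ℂ)) ^ (-(x i))) z := by
      have h1 : ContinuousAt (fun z : ℂ => z * (b i : ℂ)) z :=
        (continuous_id.mul continuous_const).continuousAt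
      have h2 : ContinuousAt (fun w : ℂ => w ^ (-(x i))) (z * (b i : ℂ)) :=
        continuousAt_zpow₀ _ _ (Or.inl (mul_ne_zero (hz0 z hz) hbi))
      have h3 : ContinuousAt ((fun w : ℂ => w ^ (-(x i))) ∘ (fun z : ℂ => z * (b i : ℂ))) z :=
        ContinuousAt.comp h2 h1
      exact h3
    exact this.continuousWithinAt
  · refine ContinuousOn.div ?_ ?_ ?_
    · exact continuousOn_finset_prod _ fun k _ => continuousOn_id.sub continuousOn_const
    · exact continuousOn_finset_prod _ fun k _ => continuousOn_id.sub continuousOn_const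
    · intro z hz
      rw [Finset.prod_ne_zero_iff]
      intro k hk
      rw [Finset.mem_Icc] at hk
      exact sub_binv_ne_zero b hz (hb k hk.1 (le_trans hk.2 hiN)).1
        (hR₁ k hk.1 (le_trans hk.2 hiN))
  · refine continuousOn_finset_prod _ fun k hk => ?_
    rw [Finset.mem_Icc] at hk
    refine ContinuousOn.inv₀ (continuousOn_const.sub
      (continuousOn_const.div continuousOn_id hz0)) ?_
    intro z hz
    exact one_sub_div_ne_zero hz (ha k hk.1).1 (ha k hk.1).2 hR1

include hN ha hb hm hR₂ in
lemma gCont (i j : ℕ) (hj1 : 1 ≤ j) (hjN : j ≤ N) (hiN : i ≤ N) (u : ℤ) :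
    ContinuousOn (fun w : ℂ =>
      w ^ u * (w * (b j : ℂ)) ^ (y j)
        * ((∏ k ∈ Finset.Icc 1 j, (w - ((b k : ℂ))⁻¹))
            / ∏ k ∈ Finset.Icc 1 i, (w - ((b k : ℂ))⁻¹))
        * (w - (a m : ℂ))⁻¹)
      (Metric.sphere (0 : ℂ) R₂) := by
  have hR1 : 1 < R₂ := R₁_gt_one hN b hb hR₂
  have hR0 : 0 < R₂ := lt_trans one_pos hR1
  have hz0 : ∀ w ∈ Metric.sphere (0 : ℂ) R₂, w ≠ 0 := fun w hw => sphere_ne_zero hw hR0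
  have hbj : ((b j : ℝ) : ℂ) ≠ 0 := by
    simpa using (hb j hj1 hjN).1.ne'
  refine ContinuousOn.mul (ContinuousOn.mul (ContinuousOn.mul ?_ ?_) ?_) ?_
  · intro w hw
    exact (continuousAt_zpow₀ w u (Or.inl (hz0 w hw))).continuousWithinAt
  · intro w hw
    have : ContinuousAt (fun w : ℂ => (w * (b j : ℂ)) ^ (y j)) w := by
      have h1 : ContinuousAt (fun w : ℂ => w * (b j : ℂ)) w :=
        (continuous_id.mul continuous_const).continuousAt
      have h2 : ContinuousAt (fun v : ℂ => v ^ (y j)) (w * (b j : ℂ)) :=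
        continuousAt_zpow₀ _ _ (Or.inl (mul_ne_zero (hz0 w hw) hbj))
      have h3 : ContinuousAt ((fun v : ℂ => v ^ (y j)) ∘ (fun w : ℂ => w * (b j : ℂ))) w :=
        ContinuousAt.comp h2 h1
      exact h3
    exact this.continuousWithinAt
  · refine ContinuousOn.div ?_ ?_ ?_
    · exact continuousOn_finset_prod _ fun k _ => continuousOn_id.sub continuousOn_const
    · exact continuousOn_finset_prod _ fun k _ => continuousOn_id.sub continuousOn_const
    · intro w hw
      rw [Finset.prod_ne_zero_iff]
      intro k hk
      rw [Finset.mem_Icc] at hk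
      exact sub_binv_ne_zero b hw (hb k hk.1 (le_trans hk.2 hiN)).1
        (hR₂ k hk.1 (le_trans hk.2 hiN))
  · refine ContinuousOn.inv₀ (continuousOn_id.sub continuousOn_const) ?_
    intro w hw
    exact sub_const_ne_zero hw (ha m hm).1 (ha m hm).2 hR1

include hN ha hb hR₁ in
lemma fInt_rec (i σ : ℕ) (hi1 : 1 ≤ i) (hiN : i ≤ N) (hσ1 : 1 ≤ σ) (hσN : σ ≤ N) (u : ℤ) :
    fInt a b x m R₁ i σ u
      = fInt a b x m R₁ i (σ - 1) (u + 1)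
        - ((b σ : ℂ))⁻¹ * fInt a b x m R₁ i (σ - 1) u := by
  have hR1 : 1 < R₁ := R₁_gt_one hN b hb hR₁
  have hR0 : 0 < R₁ := lt_trans one_pos hR1
  set cσ : ℂ := ((b σ : ℂ))⁻¹ with hcσ
  set f1 : ℂ → ℂ := fun z =>
    z⁻¹ * z ^ (u + 1) * (z * (b i : ℂ)) ^ (-(x i))
      * ((∏ k ∈ Finset.Icc 1 (σ - 1), (z - ((b k : ℂ))⁻¹))
          / ∏ k ∈ Finset.Icc 1 i, (z - ((b k : ℂ))⁻¹))
      * ∏ k ∈ Finset.Icc 1 (m - 1), (1 - (a k : ℂ) / z)⁻¹ with hf1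
  set f2 : ℂ → ℂ := fun z =>
    z⁻¹ * z ^ u * (z * (b i : ℂ)) ^ (-(x i))
      * ((∏ k ∈ Finset.Icc 1 (σ - 1), (z - ((b k : ℂ))⁻¹))
          / ∏ k ∈ Finset.Icc 1 i, (z - ((b k : ℂ))⁻¹))
      * ∏ k ∈ Finset.Icc 1 (m - 1), (1 - (a k : ℂ) / z)⁻¹ with hf2
  have hint1 : CircleIntegrable f1 0 R₁ :=
    (fCont hN a b ha hb m x hR₁ i (σ - 1) hi1 hiN (by omega) (u + 1)).circleIntegrable hR0.le
  have hint2 : CircleIntegrable (fun z => cσ * f2 z) 0 R₁ :=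
    (continuousOn_const.mul
      (fCont hN a b ha hb m x hR₁ i (σ - 1) hi1 hiN (by omega) u)).circleIntegrable hR0.le
  have heq : (∮ z in C(0, R₁),
        z⁻¹ * z ^ u * (z * (b i : ℂ)) ^ (-(x i))
          * ((∏ k ∈ Finset.Icc 1 σ, (z - ((b k : ℂ))⁻¹))
              / ∏ k ∈ Finset.Icc 1 i, (z - ((b k : ℂ))⁻¹))
          * ∏ k ∈ Finset.Icc 1 (m - 1), (1 - (a k : ℂ) / z)⁻¹)
      = ∮ z in C(0, R₁), (f1 z - cσ * f2 z) := by
    refine circleIntegral.integral_congr hR0.le fun z hz => ?_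
    have hz0 : z ≠ 0 := sphere_ne_zero hz hR0
    have hprod : (∏ k ∈ Finset.Icc 1 σ, (z - ((b k : ℂ))⁻¹))
        = (∏ k ∈ Finset.Icc 1 (σ - 1), (z - ((b k : ℂ))⁻¹)) * (z - ((b σ : ℂ))⁻¹) := by
      conv_lhs => rw [show σ = σ - 1 + 1 by omega]
      rw [Finset.prod_Icc_succ_top (by omega)]
      rw [show σ - 1 + 1 = σ by omega]
    simp only [hf1, hf2]
    rw [hprod, zpow_add_one₀ hz0, hcσ]
    ring
  unfold fInt
  rw [heq, circleIntegral.integral_sub hint1 hint2]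
  have hsmul : (∮ z in C(0, R₁), cσ * f2 z) = cσ * ∮ z in C(0, R₁), f2 z := by
    have h := circleIntegral.integral_smul (𝕜 := ℂ) cσ f2 0 R₁
    simpa [smul_eq_mul] using h
  rw [hsmul]
  rw [hf1, hf2]
  ring

include hN ha hb hm hR₂ in
lemma gInt_rec (σ i : ℕ) (hσ1 : 1 ≤ σ) (hσN : σ ≤ N) (hi1 : 1 ≤ i) (hiN : i ≤ N) (u : ℤ) :
    gInt a b y m R₂ (σ - 1) i u
      = gInt a b y m R₂ σ i (u + 1)
        - ((b σ : ℂ))⁻¹ * gInt a b y m R₂ σ i u := by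
  have hR1 : 1 < R₂ := R₁_gt_one hN b hb hR₂
  have hR0 : 0 < R₂ := lt_trans one_pos hR1
  set cσ : ℂ := ((b σ : ℂ))⁻¹ with hcσ
  set f1 : ℂ → ℂ := fun w =>
    w ^ (u + 1) * (w * (b i : ℂ)) ^ (y i)
      * ((∏ k ∈ Finset.Icc 1 i, (w - ((b k : ℂ))⁻¹))
          / ∏ k ∈ Finset.Icc 1 σ, (w - ((b k : ℂ))⁻¹))
      * (w - (a m : ℂ))⁻¹ with hf1
  set f2 : ℂ → ℂ := fun w =>
    w ^ u * (w * (b i : ℂ)) ^ (y i)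
      * ((∏ k ∈ Finset.Icc 1 i, (w - ((b k : ℂ))⁻¹))
          / ∏ k ∈ Finset.Icc 1 σ, (w - ((b k : ℂ))⁻¹))
      * (w - (a m : ℂ))⁻¹ with hf2
  have hint1 : CircleIntegrable f1 0 R₂ :=
    (gCont hN a b ha hb m hm y hR₂ σ i hi1 hiN hσN (u + 1)).circleIntegrable hR0.le
  have hint2 : CircleIntegrable (fun w => cσ * f2 w) 0 R₂ :=
    (continuousOn_const.mul
      (gCont hN a b ha hb m hm y hR₂ σ i hi1 hiN hσN u)).circleIntegrable hR0.le
  have heq : (∮ w in C(0, R₂),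
        w ^ u * (w * (b i : ℂ)) ^ (y i)
          * ((∏ k ∈ Finset.Icc 1 i, (w - ((b k : ℂ))⁻¹))
              / ∏ k ∈ Finset.Icc 1 (σ - 1), (w - ((b k : ℂ))⁻¹))
          * (w - (a m : ℂ))⁻¹)
      = ∮ w in C(0, R₂), (f1 w - cσ * f2 w) := by
    refine circleIntegral.integral_congr hR0.le fun w hw => ?_
    have hw0 : w ≠ 0 := sphere_ne_zero hw hR0
    have hwc : w - ((b σ : ℂ))⁻¹ ≠ 0 :=
      sub_binv_ne_zero b hw (hb σ hσ1 hσN).1 (hR₂ σ hσ1 hσN)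
    have hprod : (∏ k ∈ Finset.Icc 1 σ, (w - ((b k : ℂ))⁻¹))
        = (∏ k ∈ Finset.Icc 1 (σ - 1), (w - ((b k : ℂ))⁻¹)) * (w - ((b σ : ℂ))⁻¹) := by
      conv_lhs => rw [show σ = σ - 1 + 1 by omega]
      rw [Finset.prod_Icc_succ_top (by omega)]
      rw [show σ - 1 + 1 = σ by omega]
    have hkey : (w - ((b σ : ℂ))⁻¹) * (w - ((b σ : ℂ))⁻¹)⁻¹ = 1 := mul_inv_cancel₀ hwc
    simp only [hf1, hf2]
    rw [hprod, zpow_add_one₀ hw0, hcσ]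
    simp only [div_eq_mul_inv, mul_inv]
    linear_combination (-(w ^ u * (w * (b i : ℂ)) ^ (y i)
      * (∏ k ∈ Finset.Icc 1 i, (w - ((b k : ℂ))⁻¹))
      * (∏ k ∈ Finset.Icc 1 (σ - 1), (w - ((b k : ℂ))⁻¹))⁻¹
      * (w - (a m : ℂ))⁻¹)) * hkey
  unfold gInt
  rw [heq, circleIntegral.integral_sub hint1 hint2]
  have hsmul : (∮ w in C(0, R₂), cσ * f2 w) = cσ * ∮ w in C(0, R₂), f2 w := by
    have h := circleIntegral.integral_smul (𝕜 := ℂ) cσ f2 0 R₂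
    simpa [smul_eq_mul] using h
  rw [hsmul]
  rw [hf1, hf2]
  ring

/-- Inversion `z ↦ 1/w` for circle integrals around `0`. -/
lemma circleIntegral_inversion (f : ℂ → ℂ) {R : ℝ} (hR : 0 < R) :
    (∮ z in C(0, R), f z) = ∮ w in C(0, R⁻¹), f w⁻¹ * ((w : ℂ) ^ 2)⁻¹ := by
  have hR' : (R : ℝ) ≠ 0 := hR.ne'
  have key : ∀ θ : ℝ,
      deriv (circleMap 0 R⁻¹) θ • (f ((circleMap 0 R⁻¹ θ)⁻¹) * ((circleMap 0 R⁻¹ θ) ^ 2)⁻¹)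
        = deriv (circleMap 0 R) (-θ) • f (circleMap 0 R (-θ)) := by
    intro θ
    have hw : (circleMap 0 R⁻¹ θ)⁻¹ = circleMap 0 R (-θ) := by
      simp only [circleMap_zero]
      rw [mul_inv, ← Complex.exp_neg]
      push_cast
      rw [inv_inv]
      ring_nf
    have hw0 : circleMap 0 R⁻¹ θ ≠ 0 := by
      simpa using circleMap_ne_center (c := 0) (R := R⁻¹) (inv_ne_zero hR') (θ := θ)
    rw [deriv_circleMap, deriv_circleMap, hw]
    have h1 : circleMap 0 R⁻¹ θ * ((circleMap 0 R⁻¹ θ) ^ 2)⁻¹ = (circleMap 0 R⁻¹ θ)⁻¹ := by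
      field_simp
    simp only [smul_eq_mul]
    have h2 : circleMap 0 R⁻¹ θ * Complex.I
          * (f (circleMap 0 R (-θ)) * ((circleMap 0 R⁻¹ θ) ^ 2)⁻¹)
        = (circleMap 0 R⁻¹ θ * ((circleMap 0 R⁻¹ θ) ^ 2)⁻¹) * Complex.I
            * f (circleMap 0 R (-θ)) := by ring
    rw [h2, h1, hw]
  have hper : Function.Periodic
      (fun θ : ℝ => deriv (circleMap 0 R) θ • f (circleMap 0 R θ)) (2 * Real.pi) := by
    intro θ
    simp only [deriv_circleMap]
    rw [periodic_circleMap]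
  calc (∮ z in C(0, R), f z)
      = ∫ θ in (0 : ℝ)..2 * Real.pi, deriv (circleMap 0 R) θ • f (circleMap 0 R θ) := rfl
    _ = ∫ θ in (-(2 * Real.pi) : ℝ)..0, deriv (circleMap 0 R) θ • f (circleMap 0 R θ) := by
        have h := hper.intervalIntegral_add_eq (-(2 * Real.pi)) 0
        simp only [neg_add_cancel, zero_add] at h
        exact h.symm
    _ = ∫ θ in (0 : ℝ)..2 * Real.pi, deriv (circleMap 0 R) (-θ) • f (circleMap 0 R (-θ)) := by
        rw [intervalIntegral.integral_comp_neg
          (f := fun θ => deriv (circleMap 0 R) θ • f (circleMap 0 R θ))]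
        norm_num
    _ = ∮ w in C(0, R⁻¹), f w⁻¹ * ((w : ℂ) ^ 2)⁻¹ := by
        rw [circleIntegral]
        exact (intervalIntegral.integral_congr fun θ _ => key θ).symm

lemma one_sub_ne_zero_of_norm_lt {t : ℂ} (h : ‖t‖ < 1) : (1 : ℂ) - t ≠ 0 := by
  intro heq
  rw [sub_eq_zero] at heq
  rw [← heq] at h
  simp at h

include hN ha hb hR₁ in
lemma fInt_vanish (i σ : ℕ) (hi1 : 1 ≤ i) (hiN : i ≤ N) (hσN : σ ≤ N) (u : ℤ)
    (hu : u ≤ x i + (i : ℤ) - (σ : ℤ) - 1) :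
    fInt a b x m R₁ i σ u = 0 := by
  have hR1 : 1 < R₁ := R₁_gt_one hN b hb hR₁
  have hR0 : 0 < R₁ := lt_trans one_pos hR1
  have hr0 : 0 < R₁⁻¹ := inv_pos.mpr hR0
  set E : ℕ := (x i + (i : ℤ) - (σ : ℤ) - 1 - u).toNat with hEdef
  have hE : (E : ℤ) = x i + (i : ℤ) - (σ : ℤ) - 1 - u := by
    rw [hEdef, Int.toNat_of_nonneg (by omega)]
  set Gn : ℂ → ℂ := fun w =>
    ((b i : ℂ)) ^ (-(x i)) * w ^ E
      * (∏ k ∈ Finset.Icc 1 σ, (1 - w * ((b k : ℂ))⁻¹))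
      * (∏ k ∈ Finset.Icc 1 i, (1 - w * ((b k : ℂ))⁻¹))⁻¹
      * (∏ k ∈ Finset.Icc 1 (m - 1), (1 - (a k : ℂ) * w))⁻¹ with hGn
  set f : ℂ → ℂ := fun z =>
    z⁻¹ * z ^ u * (z * (b i : ℂ)) ^ (-(x i))
      * ((∏ k ∈ Finset.Icc 1 σ, (z - ((b k : ℂ))⁻¹))
          / ∏ k ∈ Finset.Icc 1 i, (z - ((b k : ℂ))⁻¹))
      * ∏ k ∈ Finset.Icc 1 (m - 1), (1 - (a k : ℂ) / z)⁻¹ with hf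
  -- pointwise identity on the small circle
  have key : ∀ w : ℂ, w ≠ 0 → f w⁻¹ * ((w : ℂ) ^ 2)⁻¹ = Gn w := by
    intro w hw0
    have hinv : ∀ j : ℕ, (∏ k ∈ Finset.Icc 1 j, (w⁻¹ - ((b k : ℂ))⁻¹))
        = w ^ (-(j : ℤ)) * ∏ k ∈ Finset.Icc 1 j, (1 - w * ((b k : ℂ))⁻¹) := by
      intro j
      have h1 : ∀ k ∈ Finset.Icc 1 j, w⁻¹ - ((b k : ℂ))⁻¹
          = w⁻¹ * (1 - w * ((b k : ℂ))⁻¹) := by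
        intro k _
        rw [mul_sub, mul_one, ← mul_assoc, inv_mul_cancel₀ hw0, one_mul]
      rw [Finset.prod_congr rfl h1, Finset.prod_mul_distrib, Finset.prod_const, Nat.card_Icc]
      simp only [Nat.add_sub_cancel]
      rw [inv_pow, ← zpow_natCast w j, ← zpow_neg]
    have hA : (∏ k ∈ Finset.Icc 1 (m - 1), (1 - (a k : ℂ) / w⁻¹)⁻¹)
        = (∏ k ∈ Finset.Icc 1 (m - 1), (1 - (a k : ℂ) * w))⁻¹ := by
      rw [← Finset.prod_inv_distrib]
      refine Finset.prod_congr rfl fun k _ => ?_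
      rw [div_inv_eq_mul]
    simp only [hf, hGn]
    rw [hinv σ, hinv i, hA, inv_inv]
    rw [show (w⁻¹ : ℂ) ^ u = w ^ (-u) by rw [inv_zpow, ← zpow_neg]]
    rw [mul_zpow]
    rw [show (w⁻¹ : ℂ) ^ (-(x i)) = w ^ (x i) by rw [inv_zpow, ← zpow_neg, neg_neg]]
    rw [show (((w : ℂ)) ^ 2)⁻¹ = w ^ (-2 : ℤ) by
      rw [← zpow_natCast w 2, ← zpow_neg]; norm_num]
    rw [div_eq_mul_inv, mul_inv]
    rw [show ((w : ℂ) ^ (-(i : ℤ)))⁻¹ = w ^ ((i : ℕ) : ℤ) by rw [← zpow_neg, neg_neg]]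
    have hpow : w * w ^ (-u) * w ^ (x i) * w ^ (-(σ : ℤ)) * w ^ ((i : ℕ) : ℤ) * w ^ (-2 : ℤ)
        = w ^ (E : ℕ) := by
      rw [show w * w ^ (-u) = w ^ (1 : ℤ) * w ^ (-u) by rw [zpow_one]]
      rw [← zpow_add₀ hw0, ← zpow_add₀ hw0, ← zpow_add₀ hw0, ← zpow_add₀ hw0,
        ← zpow_add₀ hw0]
      rw [show (1 + -u + x i + -(σ : ℤ) + (i : ℕ) + -2 : ℤ) = (E : ℤ) by omega]
      rw [zpow_natCast]
    linear_combination ((∏ k ∈ Finset.Icc 1 σ, (1 - w * ((b k : ℂ))⁻¹))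
      * (∏ k ∈ Finset.Icc 1 i, (1 - w * ((b k : ℂ))⁻¹))⁻¹
      * (∏ k ∈ Finset.Icc 1 (m - 1), (1 - (a k : ℂ) * w))⁻¹
      * ((b i : ℂ)) ^ (-(x i))) * hpow
  -- differentiability of Gn on the closed ball
  have hdiffOn : ∀ w ∈ Metric.closedBall (0 : ℂ) R₁⁻¹, DifferentiableAt ℂ Gn w := by
    intro w hw
    have hwn : ‖w‖ ≤ R₁⁻¹ := by
      rwa [Metric.mem_closedBall, dist_zero_right] at hw
    have hb_ne : ∀ k, 1 ≤ k → k ≤ N → (1 : ℂ) - w * ((b k : ℂ))⁻¹ ≠ 0 := by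
      intro k hk1 hkN
      refine one_sub_ne_zero_of_norm_lt ?_
      rw [norm_mul, norm_inv, Complex.norm_real, Real.norm_eq_abs,
        abs_of_pos (hb k hk1 hkN).1]
      have h1 : (b k)⁻¹ < R₁ := by
        have := hR₁ k hk1 hkN
        rwa [one_div] at this
      have h2 : 0 < (b k)⁻¹ := inv_pos.mpr (hb k hk1 hkN).1
      calc ‖w‖ * (b k)⁻¹ ≤ R₁⁻¹ * (b k)⁻¹ := by
            exact mul_le_mul_of_nonneg_right hwn h2.le
        _ < R₁⁻¹ * R₁ := by
            exact mul_lt_mul_of_pos_left h1 hr0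
        _ = 1 := inv_mul_cancel₀ hR0.ne'
    have ha_ne : ∀ k, 1 ≤ k → (1 : ℂ) - (a k : ℂ) * w ≠ 0 := by
      intro k hk1
      refine one_sub_ne_zero_of_norm_lt ?_
      rw [norm_mul, Complex.norm_real, Real.norm_eq_abs, abs_of_nonneg (ha k hk1).1]
      calc a k * ‖w‖ ≤ 1 * R₁⁻¹ := by
            apply mul_le_mul (ha k hk1).2 hwn (norm_nonneg w) zero_le_one
        _ < 1 := by
            rw [one_mul]
            rw [inv_lt_one_iff₀]
            right; exact hR1
    have d1 : DifferentiableAt ℂ (fun w : ℂ => ((b i : ℂ)) ^ (-(x i)) * w ^ E) w :=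
      (differentiableAt_const _).mul (differentiableAt_pow E)
    have d2 : DifferentiableAt ℂ
        (fun w : ℂ => ∏ k ∈ Finset.Icc 1 σ, (1 - w * ((b k : ℂ))⁻¹)) w :=
      DifferentiableAt.fun_finsetProd fun k _ =>
        (differentiableAt_const _).sub (differentiableAt_id.mul (differentiableAt_const _))
    have d3 : DifferentiableAt ℂ
        (fun w : ℂ => (∏ k ∈ Finset.Icc 1 i, (1 - w * ((b k : ℂ))⁻¹))⁻¹) w := by
      refine DifferentiableAt.inv ?_ ?_
      · exact DifferentiableAt.fun_finsetProd fun k _ =>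
          (differentiableAt_const _).sub (differentiableAt_id.mul (differentiableAt_const _))
      · rw [Finset.prod_ne_zero_iff]
        intro k hk
        rw [Finset.mem_Icc] at hk
        exact hb_ne k hk.1 (le_trans hk.2 hiN)
    have d4 : DifferentiableAt ℂ
        (fun w : ℂ => (∏ k ∈ Finset.Icc 1 (m - 1), (1 - (a k : ℂ) * w))⁻¹) w := by
      refine DifferentiableAt.inv ?_ ?_
      · exact DifferentiableAt.fun_finsetProd fun k _ =>
          (differentiableAt_const _).sub ((differentiableAt_const _).mul differentiableAt_id)
      · rw [Finset.prod_ne_zero_iff]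
        intro k hk
        rw [Finset.mem_Icc] at hk
        exact ha_ne k hk.1
    exact ((d1.mul d2).mul d3).mul d4
  have hzero : (∮ w in C(0, R₁⁻¹), Gn w) = 0 := by
    refine Complex.circleIntegral_eq_zero_of_differentiable_on_off_countable hr0.le
      (Set.countable_empty) ?_ ?_
    · intro w hw
      exact (hdiffOn w hw).continuousAt.continuousWithinAt
    · intro w hw
      exact hdiffOn w (Metric.ball_subset_closedBall hw.1)
  have hinv1 : (∮ z in C(0, R₁), f z) = ∮ w in C(0, R₁⁻¹), f w⁻¹ * ((w : ℂ) ^ 2)⁻¹ :=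
    circleIntegral_inversion f hR0
  have hinv2 : (∮ w in C(0, R₁⁻¹), f w⁻¹ * ((w : ℂ) ^ 2)⁻¹) = ∮ w in C(0, R₁⁻¹), Gn w := by
    refine circleIntegral.integral_congr hr0.le fun w hw => ?_
    exact key w (sphere_ne_zero hw hr0)
  show (2 * (Real.pi : ℂ) * Complex.I)⁻¹ * (∮ z in C(0, R₁), f z) = 0
  rw [hinv1, hinv2, hzero, mul_zero]

include hN ha hb hm hR₂ in
lemma gInt_vanish (σ i : ℕ) (hσN : σ ≤ N) (hi1 : 1 ≤ i) (hiN : i ≤ N) (u : ℤ)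
    (hu : u ≤ (σ : ℤ) - y i - (i : ℤ) - 1) :
    gInt a b y m R₂ σ i u = 0 := by
  have hR1 : 1 < R₂ := R₁_gt_one hN b hb hR₂
  have hR0 : 0 < R₂ := lt_trans one_pos hR1
  have hr0 : 0 < R₂⁻¹ := inv_pos.mpr hR0
  set E : ℕ := ((σ : ℤ) - y i - (i : ℤ) - 1 - u).toNat with hEdef
  have hE : (E : ℤ) = (σ : ℤ) - y i - (i : ℤ) - 1 - u := by
    rw [hEdef, Int.toNat_of_nonneg (by omega)]
  set Gn : ℂ → ℂ := fun w =>
    ((b i : ℂ)) ^ (y i) * w ^ E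
      * (∏ k ∈ Finset.Icc 1 i, (1 - w * ((b k : ℂ))⁻¹))
      * (∏ k ∈ Finset.Icc 1 σ, (1 - w * ((b k : ℂ))⁻¹))⁻¹
      * ((1 : ℂ) - (a m : ℂ) * w)⁻¹ with hGn
  set f : ℂ → ℂ := fun w =>
    w ^ u * (w * (b i : ℂ)) ^ (y i)
      * ((∏ k ∈ Finset.Icc 1 i, (w - ((b k : ℂ))⁻¹))
          / ∏ k ∈ Finset.Icc 1 σ, (w - ((b k : ℂ))⁻¹))
      * (w - (a m : ℂ))⁻¹ with hf
  have key : ∀ w : ℂ, w ≠ 0 → f w⁻¹ * ((w : ℂ) ^ 2)⁻¹ = Gn w := by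
    intro w hw0
    have hinv : ∀ j : ℕ, (∏ k ∈ Finset.Icc 1 j, (w⁻¹ - ((b k : ℂ))⁻¹))
        = w ^ (-(j : ℤ)) * ∏ k ∈ Finset.Icc 1 j, (1 - w * ((b k : ℂ))⁻¹) := by
      intro j
      have h1 : ∀ k ∈ Finset.Icc 1 j, w⁻¹ - ((b k : ℂ))⁻¹
          = w⁻¹ * (1 - w * ((b k : ℂ))⁻¹) := by
        intro k _
        rw [mul_sub, mul_one, ← mul_assoc, inv_mul_cancel₀ hw0, one_mul]
      rw [Finset.prod_congr rfl h1, Finset.prod_mul_distrib, Finset.prod_const, Nat.card_Icc]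
      simp only [Nat.add_sub_cancel]
      rw [inv_pow, ← zpow_natCast w j, ← zpow_neg]
    have hAm : (w⁻¹ - (a m : ℂ))⁻¹ = w * ((1 : ℂ) - (a m : ℂ) * w)⁻¹ := by
      rw [show w⁻¹ - (a m : ℂ) = w⁻¹ * ((1 : ℂ) - (a m : ℂ) * w) by
        rw [mul_sub, mul_one, mul_comm ((a m : ℂ)) w, ← mul_assoc,
          inv_mul_cancel₀ hw0, one_mul]]
      rw [mul_inv, inv_inv]
    simp only [hf, hGn]
    rw [hinv σ, hinv i, hAm]
    rw [show (w⁻¹ : ℂ) ^ u = w ^ (-u) by rw [inv_zpow, ← zpow_neg]]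
    rw [mul_zpow]
    rw [show (w⁻¹ : ℂ) ^ (y i) = w ^ (-(y i)) by rw [inv_zpow, ← zpow_neg]]
    rw [show (((w : ℂ)) ^ 2)⁻¹ = w ^ (-2 : ℤ) by
      rw [← zpow_natCast w 2, ← zpow_neg]; norm_num]
    rw [div_eq_mul_inv, mul_inv]
    rw [show ((w : ℂ) ^ (-(σ : ℤ)))⁻¹ = w ^ ((σ : ℕ) : ℤ) by rw [← zpow_neg, neg_neg]]
    have hpow : w ^ (-u) * w ^ (-(y i)) * w ^ (-(i : ℤ)) * w ^ ((σ : ℕ) : ℤ) * w * w ^ (-2 : ℤ)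
        = w ^ (E : ℕ) := by
      rw [← zpow_add₀ hw0, ← zpow_add₀ hw0, ← zpow_add₀ hw0, ← zpow_add_one₀ hw0,
        ← zpow_add₀ hw0]
      rw [show (-u + -(y i) + -(i : ℤ) + (σ : ℕ) + 1 + -2 : ℤ) = (E : ℤ) by omega]
      rw [zpow_natCast]
    linear_combination (((b i : ℂ)) ^ (y i)
      * (∏ k ∈ Finset.Icc 1 i, (1 - w * ((b k : ℂ))⁻¹))
      * (∏ k ∈ Finset.Icc 1 σ, (1 - w * ((b k : ℂ))⁻¹))⁻¹
      * ((1 : ℂ) - (a m : ℂ) * w)⁻¹) * hpow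
  have hdiffOn : ∀ w ∈ Metric.closedBall (0 : ℂ) R₂⁻¹, DifferentiableAt ℂ Gn w := by
    intro w hw
    have hwn : ‖w‖ ≤ R₂⁻¹ := by
      rwa [Metric.mem_closedBall, dist_zero_right] at hw
    have hb_ne : ∀ k, 1 ≤ k → k ≤ N → (1 : ℂ) - w * ((b k : ℂ))⁻¹ ≠ 0 := by
      intro k hk1 hkN
      refine one_sub_ne_zero_of_norm_lt ?_
      rw [norm_mul, norm_inv, Complex.norm_real, Real.norm_eq_abs,
        abs_of_pos (hb k hk1 hkN).1]
      have h1 : (b k)⁻¹ < R₂ := by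
        have := hR₂ k hk1 hkN
        rwa [one_div] at this
      have h2 : 0 < (b k)⁻¹ := inv_pos.mpr (hb k hk1 hkN).1
      calc ‖w‖ * (b k)⁻¹ ≤ R₂⁻¹ * (b k)⁻¹ := by
            exact mul_le_mul_of_nonneg_right hwn h2.le
        _ < R₂⁻¹ * R₂ := by
            exact mul_lt_mul_of_pos_left h1 hr0
        _ = 1 := inv_mul_cancel₀ hR0.ne'
    have ha_ne : (1 : ℂ) - (a m : ℂ) * w ≠ 0 := by
      refine one_sub_ne_zero_of_norm_lt ?_
      rw [norm_mul, Complex.norm_real, Real.norm_eq_abs, abs_of_nonneg (ha m hm).1]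
      calc a m * ‖w‖ ≤ 1 * R₂⁻¹ := by
            apply mul_le_mul (ha m hm).2 hwn (norm_nonneg w) zero_le_one
        _ < 1 := by
            rw [one_mul, inv_lt_one_iff₀]
            right; exact hR1
    have d1 : DifferentiableAt ℂ (fun w : ℂ => ((b i : ℂ)) ^ (y i) * w ^ E) w :=
      (differentiableAt_const _).mul (differentiableAt_pow E)
    have d2 : DifferentiableAt ℂ
        (fun w : ℂ => ∏ k ∈ Finset.Icc 1 i, (1 - w * ((b k : ℂ))⁻¹)) w :=
      DifferentiableAt.fun_finsetProd fun k _ =>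
        (differentiableAt_const _).sub (differentiableAt_id.mul (differentiableAt_const _))
    have d3 : DifferentiableAt ℂ
        (fun w : ℂ => (∏ k ∈ Finset.Icc 1 σ, (1 - w * ((b k : ℂ))⁻¹))⁻¹) w := by
      refine DifferentiableAt.inv ?_ ?_
      · exact DifferentiableAt.fun_finsetProd fun k _ =>
          (differentiableAt_const _).sub (differentiableAt_id.mul (differentiableAt_const _))
      · rw [Finset.prod_ne_zero_iff]
        intro k hk
        rw [Finset.mem_Icc] at hk
        exact hb_ne k hk.1 (le_trans hk.2 hσN)
    have d4 : DifferentiableAt ℂ (fun w : ℂ => ((1 : ℂ) - (a m : ℂ) * w)⁻¹) w := by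
      refine DifferentiableAt.inv ?_ ha_ne
      exact (differentiableAt_const _).sub ((differentiableAt_const _).mul differentiableAt_id)
    exact ((d1.mul d2).mul d3).mul d4
  have hzero : (∮ w in C(0, R₂⁻¹), Gn w) = 0 := by
    refine Complex.circleIntegral_eq_zero_of_differentiable_on_off_countable hr0.le
      (Set.countable_empty) ?_ ?_
    · intro w hw
      exact (hdiffOn w hw).continuousAt.continuousWithinAt
    · intro w hw
      exact hdiffOn w (Metric.ball_subset_closedBall hw.1)
  have hinv1 : (∮ w in C(0, R₂), f w) = ∮ w in C(0, R₂⁻¹), f w⁻¹ * ((w : ℂ) ^ 2)⁻¹ :=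
    circleIntegral_inversion f hR0
  have hinv2 : (∮ w in C(0, R₂⁻¹), f w⁻¹ * ((w : ℂ) ^ 2)⁻¹) = ∮ w in C(0, R₂⁻¹), Gn w := by
    refine circleIntegral.integral_congr hr0.le fun w hw => ?_
    exact key w (sphere_ne_zero hw hr0)
  show (2 * (Real.pi : ℂ) * Complex.I)⁻¹ * (∮ w in C(0, R₂), f w) = 0
  rw [hinv1, hinv2, hzero, mul_zero]

end Analytic

/-- **Lemma 2.3** (summation by parts identity for the convolution sums). -/
theorem lemma_sbp1
    (N : ℕ) (hN : 1 ≤ N)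
    (a b : ℕ → ℝ)
    (ha : ∀ i, 1 ≤ i → 0 ≤ a i ∧ a i ≤ 1)
    (hb : ∀ j, 1 ≤ j → j ≤ N → 0 < b j ∧ b j ≤ 1)
    (hab : ∀ i j, 1 ≤ i → 1 ≤ j → j ≤ N → 0 < a i * b j ∧ a i * b j < 1)
    (m : ℕ) (hm : 1 ≤ m)
    (x y : ℕ → ℤ)
    (hx : ∀ i j, 1 ≤ i → i ≤ j → j ≤ N → x i ≤ x j)
    (hy : ∀ i j, 1 ≤ i → i ≤ j → j ≤ N → y i ≤ y j)
    (R₁ R₂ : ℝ)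
    (hR₁ : ∀ k, 1 ≤ k → k ≤ N → 1 / b k < R₁)
    (hR₂ : ∀ k, 1 ≤ k → k ≤ N → 1 / b k < R₂) :
    (∑' u : {u : Fin N → ℤ // Monotone u},
        Matrix.det (Matrix.of fun i j : Fin N =>
            fInt a b x m R₁ (i.1 + 1) (j.1 + 1) (u.1 j))
          * Matrix.det (Matrix.of fun i j : Fin N =>
              gInt a b y m R₂ (j.1 + 1) (i.1 + 1) (-(u.1 j))))
      = ∑' u : {u : Fin N → ℤ // Monotone u},
          Matrix.det (Matrix.of fun i j : Fin N =>
              fInt a b x m R₁ (i.1 + 1) 0 (u.1 j))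
            * Matrix.det (Matrix.of fun i j : Fin N =>
                gInt a b y m R₂ 0 (i.1 + 1) (-(u.1 j))) := by
  classical
  refine SBP.abstract_sbp
    (fun i σ u => fInt a b x m R₁ i σ u)
    (fun σ i u => gInt a b y m R₂ σ i u)
    (fun σ => ((b σ : ℂ))⁻¹)
    (x 1 - N) (y N + N + 1)
    ?_ ?_ ?_ ?_
  · intro i σ u hi1 hiN hσ1 hσN
    exact fInt_rec hN a b ha hb m x hR₁ i σ hi1 hiN hσ1 hσN u
  · intro σ i u hσ1 hσN hi1 hiN
    exact gInt_rec hN a b ha hb m hm y hR₂ σ i hσ1 hσN hi1 hiN u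
  · intro i σ u hi1 hiN hσN hu
    apply fInt_vanish hN a b ha hb m x hR₁ i σ hi1 hiN hσN u
    have hx1 : x 1 ≤ x i := by
      rcases eq_or_lt_of_le hi1 with h | h
      · rw [← h]
      · exact hx 1 i le_rfl hi1 hiN
    omega
  · intro σ i u hσN hi1 hiN hu
    apply gInt_vanish hN a b ha hb m hm y hR₂ σ i hσN hi1 hiN (-u)
    have hyN : y i ≤ y N := by
      rcases eq_or_lt_of_le hiN with h | h
      · rw [h]
      · exact hy i N hi1 hiN le_rfl
    omega
end

section
/- Let h(j) = h_k for j ∈ (n_{k−1}, n_k] as in the context, and define the N × N matrix F_b(i,j) = (1/2πi)∮_{γ_b} dz (z b_j)^{h(j)−1} (z b_i)^{−x_i} [∏_{k=1}^{j−1}(z − 1/b_k) / ∏_{k=1}^{i}(z − 1/b_k)] ∏_{k=1}^{m}(1 − a_k b_j)/(1 − a_k/z), where γ_b is a simple closed counterclockwise contour encircling all of the points 1/b_1, …, 1/b_N and none of the points 0, a_1, …, a_m. Then F_b(i,j) = 0 whenever i < j and F_b(j,j) = 1 for all j; in particular F_b is lower triangular with unit diagonal and det F_b = 1. -/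
open Finset Metric Set

/-- The matrix `F_b` is lower triangular with unit diagonal, hence `det F_b = 1`. -/
theorem Fb_lower_triangular_unit_diag
    (N : ℕ) (hN : 1 ≤ N)
    (m : ℕ)
    (a b : ℕ → ℝ)
    (ha : ∀ i, 1 ≤ i → i ≤ m → 0 ≤ a i ∧ a i ≤ 1)
    (hb : ∀ j, 1 ≤ j → j ≤ N → 0 < b j ∧ b j ≤ 1)
    (hab : ∀ i j, 1 ≤ i → i ≤ m → 1 ≤ j → j ≤ N → 0 < a i * b j ∧ a i * b j < 1)
    (x : ℕ → ℤ)
    (hx : ∀ i j, 1 ≤ i → i ≤ j → j ≤ N → x i ≤ x j)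
    (p : ℕ) (hp : 1 ≤ p)
    (n : ℕ → ℕ) (hn0 : n 0 = 0) (hnp : n p = N)
    (hmono : ∀ k l, k ≤ p → l ≤ p → k < l → n k < n l)
    (h : ℕ → ℤ)
    (hfun : ℕ → ℤ)
    (hhfun : ∀ k j, 1 ≤ k → k ≤ p → n (k - 1) < j → j ≤ n k → hfun j = h k)
    -- the contour `γ_b`: a circle of center `cb` and radius `rb` encircling all points
    -- `1/b_k` and none of the points `0, a_1, …, a_m`
    (cb : ℂ) (rb : ℝ) (hrb : 0 < rb)
    (hγb_in : ∀ k, 1 ≤ k → k ≤ N → ‖((b k : ℂ))⁻¹ - cb‖ < rb)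
    (hγb_out0 : rb < ‖cb‖)
    (hγb_outa : ∀ k, 1 ≤ k → k ≤ m → rb < ‖(a k : ℂ) - cb‖) :
    ∀ Fb : Matrix (Fin N) (Fin N) ℂ,
      (Fb = Matrix.of fun i j : Fin N =>
        (2 * (Real.pi : ℂ) * Complex.I)⁻¹ *
          ∮ z in C(cb, rb),
            (z * (b (j.1 + 1) : ℂ)) ^ (hfun (j.1 + 1) - 1)
              * (z * (b (i.1 + 1) : ℂ)) ^ (-(x (i.1 + 1)))
              * ((∏ k ∈ Finset.Icc 1 j.1, (z - ((b k : ℂ))⁻¹))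
                  / ∏ k ∈ Finset.Icc 1 (i.1 + 1), (z - ((b k : ℂ))⁻¹))
              * ∏ k ∈ Finset.Icc 1 m,
                  ((1 - (a k : ℂ) * (b (j.1 + 1) : ℂ)) / (1 - (a k : ℂ) / z))) →
      (∀ i j : Fin N, i < j → Fb i j = 0) ∧ (∀ j : Fin N, Fb j j = 1)
        ∧ Matrix.det Fb = 1 := by
  intro Fb hFb
  have hπ : (2 * (Real.pi : ℂ) * Complex.I) ≠ 0 := by
    simp [Real.pi_ne_zero, Complex.I_ne_zero]
  -- `0` is outside the closed disc
  have h0mem : ∀ z ∈ Metric.closedBall cb rb, z ≠ 0 := by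
    intro z hz h0
    rw [Metric.mem_closedBall, Complex.dist_eq, h0, zero_sub, norm_neg] at hz
    exact absurd hγb_out0 (not_lt.2 hz)
  -- the `a k` are outside the closed disc
  have hamem : ∀ k, 1 ≤ k → k ≤ m → ∀ z ∈ Metric.closedBall cb rb, z ≠ (a k : ℂ) := by
    intro k h1 h2 z hz he
    rw [Metric.mem_closedBall, Complex.dist_eq, he] at hz
    exact absurd (hγb_outa k h1 h2) (not_lt.2 hz)
  -- the denominators `1 - a k / z` do not vanish on the closed disc
  have hden : ∀ k, 1 ≤ k → k ≤ m → ∀ z ∈ Metric.closedBall cb rb,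
      (1 : ℂ) - (a k : ℂ) / z ≠ 0 := by
    intro k h1 h2 z hz he
    have h1' : (a k : ℂ) / z = 1 := by linear_combination -he
    have h2' : (a k : ℂ) = z := (div_eq_one_iff_eq (h0mem z hz)).1 h1'
    exact hamem k h1 h2 z hz h2'.symm
  -- `(b k)⁻¹` is never on the sphere
  have hspB : ∀ k, 1 ≤ k → k ≤ N → ∀ z ∈ Metric.sphere cb rb, z - ((b k : ℂ))⁻¹ ≠ 0 := by
    intro k h1 h2 z hz he
    rw [sub_eq_zero] at he
    rw [Metric.mem_sphere, Complex.dist_eq, he] at hz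
    have hlt := hγb_in k h1 h2
    rw [hz] at hlt
    exact lt_irrefl _ hlt
  have bnz : ∀ k, 1 ≤ k → k ≤ N → ((b k : ℂ)) ≠ 0 := by
    intro k h1 h2
    exact_mod_cast (hb k h1 h2).1.ne'
  -- differentiability helpers
  have hdiffmul : ∀ (β : ℂ) (e : ℤ), β ≠ 0 → ∀ z ∈ Metric.closedBall cb rb,
      DifferentiableAt ℂ (fun z : ℂ => (z * β) ^ e) z := by
    intro β e hβ z hz
    exact (differentiableAt_id.mul (differentiableAt_const β)).zpow
      (Or.inl (mul_ne_zero (h0mem z hz) hβ))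
  have hdiffR : ∀ (c : ℕ → ℂ), ∀ z ∈ Metric.closedBall cb rb,
      DifferentiableAt ℂ (fun z : ℂ => ∏ k ∈ Finset.Icc 1 m, (c k / (1 - (a k : ℂ) / z))) z := by
    intro c z hz
    refine DifferentiableAt.fun_finsetProd fun k hk => ?_
    simp only [Finset.mem_Icc] at hk
    exact (differentiableAt_const _).div
      ((differentiableAt_const _).sub ((differentiableAt_const _).div differentiableAt_id
        (h0mem z hz))) (hden k hk.1 hk.2 z hz)
  -- the off-diagonal entries vanish
  have hzero : ∀ i j : Fin N, i < j → Fb i j = 0 := by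
    intro i j hij
    rw [hFb]
    simp only [Matrix.of_apply]
    have hij' : i.1 + 1 ≤ j.1 := hij
    set g : ℂ → ℂ := fun z =>
      (z * (b (j.1 + 1) : ℂ)) ^ (hfun (j.1 + 1) - 1)
        * (z * (b (i.1 + 1) : ℂ)) ^ (-(x (i.1 + 1)))
        * (∏ k ∈ Finset.Icc (i.1 + 2) j.1, (z - ((b k : ℂ))⁻¹))
        * ∏ k ∈ Finset.Icc 1 m,
            ((1 - (a k : ℂ) * (b (j.1 + 1) : ℂ)) / (1 - (a k : ℂ) / z)) with hg
    have heq : Set.EqOn (fun z : ℂ =>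
        (z * (b (j.1 + 1) : ℂ)) ^ (hfun (j.1 + 1) - 1)
          * (z * (b (i.1 + 1) : ℂ)) ^ (-(x (i.1 + 1)))
          * ((∏ k ∈ Finset.Icc 1 j.1, (z - ((b k : ℂ))⁻¹))
              / ∏ k ∈ Finset.Icc 1 (i.1 + 1), (z - ((b k : ℂ))⁻¹))
          * ∏ k ∈ Finset.Icc 1 m,
              ((1 - (a k : ℂ) * (b (j.1 + 1) : ℂ)) / (1 - (a k : ℂ) / z))) g
        (Metric.sphere cb rb) := by
      intro z hz
      have hQ : (∏ k ∈ Finset.Icc 1 (i.1 + 1), (z - ((b k : ℂ))⁻¹)) ≠ 0 := by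
        rw [Finset.prod_ne_zero_iff]
        intro k hk
        simp only [Finset.mem_Icc] at hk
        exact hspB k hk.1 (hk.2.trans (Nat.succ_le_of_lt i.2)) z hz
      have hsplit : (∏ k ∈ Finset.Icc 1 j.1, (z - ((b k : ℂ))⁻¹))
          = (∏ k ∈ Finset.Icc 1 (i.1 + 1), (z - ((b k : ℂ))⁻¹))
            * ∏ k ∈ Finset.Icc (i.1 + 2) j.1, (z - ((b k : ℂ))⁻¹) := by
        have hset : Finset.Icc 1 j.1 = Finset.Icc 1 (i.1 + 1) ∪ Finset.Icc (i.1 + 2) j.1 := by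
          ext t
          simp only [Finset.mem_Icc, Finset.mem_union]
          omega
        have hdisj : Disjoint (Finset.Icc 1 (i.1 + 1)) (Finset.Icc (i.1 + 2) j.1) := by
          rw [Finset.disjoint_left]
          intro t ht1 ht2
          simp only [Finset.mem_Icc] at ht1 ht2
          omega
        rw [hset, Finset.prod_union hdisj]
      simp only [hg]
      rw [hsplit, mul_div_cancel_left₀ _ hQ]
    rw [circleIntegral.integral_congr hrb.le heq]
    have hdg : ∀ z ∈ Metric.closedBall cb rb, DifferentiableAt ℂ g z := by
      intro z hz
      refine (((hdiffmul _ _ (bnz _ (Nat.succ_le_succ (Nat.zero_le _)) j.2 ) z hz).mul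
        (hdiffmul _ _ (bnz _ (Nat.succ_le_succ (Nat.zero_le _)) i.2) z hz)).mul
        (DifferentiableAt.fun_finsetProd fun k _ => (differentiableAt_id.sub_const _))).mul
        (hdiffR _ z hz)
    rw [Complex.circleIntegral_eq_zero_of_differentiable_on_off_countable hrb.le
      Set.countable_empty (fun z hz => (hdg z hz).continuousAt.continuousWithinAt)
      (fun z hz => hdg z (Metric.ball_subset_closedBall hz.1))]
    exact mul_zero _
  -- the diagonal entries are `1`
  have hdiag : ∀ j : Fin N, Fb j j = 1 := by
    intro j
    rw [hFb]
    simp only [Matrix.of_apply]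
    have hjN : j.1 + 1 ≤ N := j.2
    have hj1 : (1 : ℕ) ≤ j.1 + 1 := Nat.succ_le_succ (Nat.zero_le _)
    set w : ℂ := ((b (j.1 + 1) : ℂ))⁻¹ with hw
    set g : ℂ → ℂ := fun z =>
      (z * (b (j.1 + 1) : ℂ)) ^ (hfun (j.1 + 1) - 1)
        * (z * (b (j.1 + 1) : ℂ)) ^ (-(x (j.1 + 1)))
        * ∏ k ∈ Finset.Icc 1 m,
            ((1 - (a k : ℂ) * (b (j.1 + 1) : ℂ)) / (1 - (a k : ℂ) / z)) with hg
    have heq : Set.EqOn (fun z : ℂ =>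
        (z * (b (j.1 + 1) : ℂ)) ^ (hfun (j.1 + 1) - 1)
          * (z * (b (j.1 + 1) : ℂ)) ^ (-(x (j.1 + 1)))
          * ((∏ k ∈ Finset.Icc 1 j.1, (z - ((b k : ℂ))⁻¹))
              / ∏ k ∈ Finset.Icc 1 (j.1 + 1), (z - ((b k : ℂ))⁻¹))
          * ∏ k ∈ Finset.Icc 1 m,
              ((1 - (a k : ℂ) * (b (j.1 + 1) : ℂ)) / (1 - (a k : ℂ) / z)))
        (fun z => (z - w)⁻¹ • g z) (Metric.sphere cb rb) := by
      intro z hz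
      have hP : (∏ k ∈ Finset.Icc 1 j.1, (z - ((b k : ℂ))⁻¹)) ≠ 0 := by
        rw [Finset.prod_ne_zero_iff]
        intro k hk
        simp only [Finset.mem_Icc] at hk
        exact hspB k hk.1 (hk.2.trans (Nat.le_of_succ_le hjN)) z hz
      have hsplit : (∏ k ∈ Finset.Icc 1 (j.1 + 1), (z - ((b k : ℂ))⁻¹))
          = (∏ k ∈ Finset.Icc 1 j.1, (z - ((b k : ℂ))⁻¹)) * (z - w) := by
        have hset : Finset.Icc 1 (j.1 + 1) = Finset.Icc 1 j.1 ∪ {j.1 + 1} := by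
          ext t
          simp only [Finset.mem_Icc, Finset.mem_union, Finset.mem_singleton]
          omega
        have hdisj : Disjoint (Finset.Icc 1 j.1) ({j.1 + 1} : Finset ℕ) := by
          rw [Finset.disjoint_left]
          intro t ht1 ht2
          simp only [Finset.mem_Icc] at ht1
          simp only [Finset.mem_singleton] at ht2
          omega
        rw [hset, Finset.prod_union hdisj, Finset.prod_singleton]
      simp only [hg, smul_eq_mul]
      rw [hsplit, div_mul_cancel_left₀ hP]
      ring
    rw [circleIntegral.integral_congr hrb.le heq]
    have hdg : ∀ z ∈ Metric.closedBall cb rb, DifferentiableAt ℂ g z := by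
      intro z hz
      exact ((hdiffmul _ _ (bnz _ hj1 hjN) z hz).mul
        (hdiffmul _ _ (bnz _ hj1 hjN) z hz)).mul (hdiffR _ z hz)
    have hwin : w ∈ Metric.ball cb rb := by
      rw [Metric.mem_ball, Complex.dist_eq]
      exact hγb_in _ hj1 hjN
    rw [Complex.circleIntegral_sub_inv_smul_of_differentiable_on_off_countable
      (s := ∅) Set.countable_empty hwin
      (fun z hz => (hdg z hz).continuousAt.continuousWithinAt)
      (fun z hz => hdg z (Metric.ball_subset_closedBall hz.1))]
    have hwB : w * (b (j.1 + 1) : ℂ) = 1 := inv_mul_cancel₀ (bnz _ hj1 hjN)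
    have hgw : g w = 1 := by
      simp only [hg, hwB, one_zpow, one_mul]
      refine Finset.prod_eq_one fun k hk => ?_
      simp only [Finset.mem_Icc] at hk
      have hak : (a k : ℂ) / w = (a k : ℂ) * (b (j.1 + 1) : ℂ) := by
        rw [hw, div_eq_mul_inv, inv_inv]
      have hne : (1 : ℂ) - (a k : ℂ) * (b (j.1 + 1) : ℂ) ≠ 0 := by
        have hlt := (hab k (j.1 + 1) hk.1 hk.2 hj1 hjN).2
        have : ((1 - a k * b (j.1 + 1) : ℝ) : ℂ) ≠ 0 := by
          rw [Complex.ofReal_ne_zero]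
          exact ne_of_gt (by linarith)
        convert this using 1
        push_cast
        ring
      rw [hak, div_self hne]
    rw [hgw, smul_eq_mul, mul_one, inv_mul_cancel₀ hπ]
  refine ⟨hzero, hdiag, ?_⟩
  have hbt : Fb.BlockTriangular OrderDual.toDual := by
    intro i j hij
    exact hzero i j hij
  rw [Matrix.det_of_lowerTriangular Fb hbt]
  simp [hdiag]
end

section
/- Define J_{b,b}(i,j) = (1/(2πi)^4)∮ dζ ∮ dω ∮ dz ∮ dw G(z | [n],[m],h−1) G(w | [N]∖[n],[M]∖[m],H−h) / (G(ζ | [i],[m],h−1) G(ω | [N]∖[j−1],[M]∖[m],H−h) (z−w)(z−ζ)(w−ω)), where the four contours are simple closed counterclockwise curves, each encircling all of the points 1/b_1, …, 1/b_N and none of the points 0, a_1, …, a_M, nested so that the z-contour contains the w-contour, which contains the ζ-contour, which contains the ω-contour. Then for all 1 ≤ i,j ≤ N, J_{b,b}(i,j) = 1{i = j and i ≤ n}. -/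
open Complex Metric Set Filter Topology

noncomputable section

/-- The function `G(z | S, T, h) = z^h ∏_{k∈S}(z - 1/b_k) ∏_{k∈T}(1 - a_k/z)⁻¹`. -/
noncomputable def GST (a b : ℕ → ℝ) (S T : Finset ℕ) (h : ℤ) (z : ℂ) : ℂ :=
  z ^ h * (∏ k ∈ S, (z - ((b k : ℂ))⁻¹)) * ∏ k ∈ T, (1 - (a k : ℂ) / z)⁻¹

lemma jbb_sphere_ne {c z p : ℂ} {r : ℝ} (hz : z ∈ sphere c r) (hp : p ∈ ball c r) : z ≠ p := by
  rintro rfl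
  rw [mem_sphere] at hz
  rw [mem_ball, hz] at hp
  exact lt_irrefl _ hp

lemma jbb_sphere_ne' {c z ζ : ℂ} {r : ℝ} (hz : z ∈ sphere c r) (hζ : ζ ∉ closedBall c r) :
    z ≠ ζ := by
  rintro rfl
  exact hζ (sphere_subset_closedBall hz)

lemma jbb_cauchy_div {f : ℂ → ℂ} {c p : ℂ} {r : ℝ}
    (hf : DifferentiableOn ℂ f (closedBall c r)) (hp : p ∈ ball c r) :
    (∮ z in C(c, r), f z / (z - p)) = (2 * Real.pi * Complex.I) * f p := by
  have h := hf.circleIntegral_sub_inv_smul hp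
  calc (∮ z in C(c, r), f z / (z - p)) = ∮ z in C(c, r), (z - p)⁻¹ • f z := by
        congr 1; funext z; rw [smul_eq_mul, div_eq_mul_inv, mul_comm]
    _ = (2 * Real.pi * Complex.I) • f p := h
    _ = (2 * Real.pi * Complex.I) * f p := by rw [smul_eq_mul]

lemma jbb_holo_zero {f : ℂ → ℂ} {c : ℂ} {r : ℝ} (hr : 0 ≤ r)
    (hf : DifferentiableOn ℂ f (closedBall c r)) :
    (∮ z in C(c, r), f z) = 0 :=
  Complex.circleIntegral_eq_zero_of_differentiable_on_off_countable hr countable_empty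
    hf.continuousOn fun z hz => hf.differentiableAt (closedBall_mem_nhds_of_mem hz.1)

lemma jbb_two_poles {f : ℂ → ℂ} {c p q : ℂ} {r : ℝ} (hr : 0 ≤ r)
    (hf : DifferentiableOn ℂ f (closedBall c r)) (hp : p ∈ ball c r) (hq : q ∈ ball c r)
    (hpq : p ≠ q) :
    (∮ z in C(c, r), f z / ((z - p) * (z - q)))
      = (2 * Real.pi * Complex.I) * (f p - f q) / (p - q) := by
  have hfc : ContinuousOn f (sphere c r) := hf.continuousOn.mono sphere_subset_closedBall
  have hip : CircleIntegrable (fun z => f z / (z - p)) c r := by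
    refine ContinuousOn.circleIntegrable hr (hfc.div (by fun_prop) ?_)
    exact fun z hz => sub_ne_zero.2 (jbb_sphere_ne hz hp)
  have hiq : CircleIntegrable (fun z => f z / (z - q)) c r := by
    refine ContinuousOn.circleIntegrable hr (hfc.div (by fun_prop) ?_)
    exact fun z hz => sub_ne_zero.2 (jbb_sphere_ne hz hq)
  have key : EqOn (fun z => f z / ((z - p) * (z - q)))
      (fun z => (p - q)⁻¹ * (f z / (z - p) - f z / (z - q))) (sphere c r) := by
    intro z hz
    have h1 : z - p ≠ 0 := sub_ne_zero.2 (jbb_sphere_ne hz hp)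
    have h2 : z - q ≠ 0 := sub_ne_zero.2 (jbb_sphere_ne hz hq)
    have h3 : p - q ≠ 0 := sub_ne_zero.2 hpq
    field_simp
    ring
  rw [circleIntegral.integral_congr hr key, circleIntegral.integral_const_mul,
    circleIntegral.integral_sub hip hiq, jbb_cauchy_div hf hp, jbb_cauchy_div hf hq]
  have h3 : p - q ≠ 0 := sub_ne_zero.2 hpq
  field_simp

lemma jbb_prod_zero {c : ℂ} {r : ℝ} (hr : 0 < r) (s : Finset ℕ) (p : ℕ → ℂ)
    (hcard : 2 ≤ s.card) (hp : ∀ k ∈ s, p k ∈ ball c r) :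
    (∮ z in C(c, r), (∏ k ∈ s, (z - p k))⁻¹) = 0 := by
  set F : ℂ → ℂ := fun z => (∏ k ∈ s, (z - p k))⁻¹ with hF
  have hdiff : ∀ z ∉ ball c r, DifferentiableAt ℂ F z := by
    intro z hz
    have hne : ∏ k ∈ s, (z - p k) ≠ 0 :=
      Finset.prod_ne_zero_iff.2 fun k hk =>
        sub_ne_zero.2 fun h => hz (h ▸ hp k hk)
    exact (DifferentiableAt.fun_finsetProd fun k _ =>
      (differentiable_id.sub_const _).differentiableAt).inv hne
  have key : ∀ R, r ≤ R → (∮ z in C(c, R), F z) = ∮ z in C(c, r), F z := by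
    intro R hR
    refine Complex.circleIntegral_eq_of_differentiable_on_annulus_off_countable hr hR
      countable_empty ?_ ?_
    · exact fun z hz => (hdiff z hz.2).continuousAt.continuousWithinAt
    · exact fun z hz => hdiff z fun hb => hz.1.2 (ball_subset_closedBall hb)
  have hbound : ∀ R, r + 1 ≤ R → ‖∮ z in C(c, R), F z‖ ≤ 2 * Real.pi * R * ((R - r) ^ 2)⁻¹ := by
    intro R hR
    have hR0 : 0 ≤ R := by linarith
    have h1r : (1:ℝ) ≤ R - r := by linarith
    have h0r : (0:ℝ) < R - r := by linarith
    have hptw : ∀ z ∈ sphere c R, ‖F z‖ ≤ ((R - r) ^ 2)⁻¹ := by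
      intro z hz
      have hzm : ∀ k ∈ s, R - r ≤ ‖z - p k‖ := by
        intro k hk
        have h1 : dist (p k) c < r := mem_ball.1 (hp k hk)
        have h2 : dist z c = R := mem_sphere.1 hz
        have h3 : dist z c ≤ dist z (p k) + dist (p k) c := dist_triangle _ _ _
        have : ‖z - p k‖ = dist z (p k) := (dist_eq_norm _ _).symm
        rw [this]; linarith
      have hprod : (R - r) ^ s.card ≤ ‖∏ k ∈ s, (z - p k)‖ := by
        rw [norm_prod]
        calc (R - r) ^ s.card = ∏ _k ∈ s, (R - r) := (Finset.prod_const _).symm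
          _ ≤ ∏ k ∈ s, ‖z - p k‖ :=
            Finset.prod_le_prod (fun k _ => h0r.le) (fun k hk => hzm k hk)
      have h2c : (R - r) ^ 2 ≤ (R - r) ^ s.card := pow_le_pow_right₀ h1r hcard
      have hFz : ‖F z‖ ≤ ((R - r) ^ 2)⁻¹ := by
        rw [hF]
        simp only [norm_inv]
        exact inv_anti₀ (by positivity) (le_trans h2c hprod)
      exact hFz
    exact circleIntegral.norm_integral_le_of_norm_le_const (f := F) (c := c)
      (C := ((R - r) ^ 2)⁻¹) hR0 hptw
  -- limit argument
  have t0 : Tendsto (fun x : ℝ => 2 * Real.pi * (x + r) * (x ^ 2)⁻¹) atTop (𝓝 0) := by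
    have e : ∀ᶠ x : ℝ in atTop,
        2 * Real.pi * x⁻¹ + (2 * Real.pi * r) * (x⁻¹ * x⁻¹)
          = 2 * Real.pi * (x + r) * (x ^ 2)⁻¹ := by
      filter_upwards [eventually_ne_atTop (0:ℝ)] with x hx
      field_simp
      try ring
    refine Tendsto.congr' e ?_
    have ha : Tendsto (fun x : ℝ => 2 * Real.pi * x⁻¹) atTop (𝓝 0) := by
      simpa using tendsto_inv_atTop_zero.const_mul (2 * Real.pi)
    have hb : Tendsto (fun x : ℝ => (2 * Real.pi * r) * (x⁻¹ * x⁻¹)) atTop (𝓝 0) := by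
      simpa using (tendsto_inv_atTop_zero.mul tendsto_inv_atTop_zero).const_mul (2 * Real.pi * r)
    simpa using ha.add hb
  have t : Tendsto (fun R : ℝ => 2 * Real.pi * R * ((R - r) ^ 2)⁻¹) atTop (𝓝 0) := by
    have hcomp := t0.comp (tendsto_atTop_add_const_right atTop (-r) (tendsto_id (α := ℝ)))
    refine hcomp.congr fun R => ?_
    simp only [Function.comp, id]
    ring_nf
  have hev : ∀ᶠ R in atTop, ‖∮ z in C(c, r), F z‖ ≤ 2 * Real.pi * R * ((R - r) ^ 2)⁻¹ := by
    filter_upwards [eventually_ge_atTop (r + 1)] with R hR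
    rw [← key R (by linarith)]
    exact hbound R hR
  have hle : ‖∮ z in C(c, r), F z‖ ≤ 0 := ge_of_tendsto t hev
  exact norm_le_zero_iff.1 hle

lemma jbb_L {c : ℂ} {r : ℝ} (hr : 0 < r) {ζ : ℂ} (hζ : ζ ∉ closedBall c r)
    (s : Finset ℕ) (q : ℕ → ℂ) (hs : s.Nonempty) (hq : ∀ k ∈ s, q k ∈ ball c r) :
    (∮ z in C(c, r), ((z - ζ) * ∏ k ∈ s, (z - q k))⁻¹)
      = -((2 * Real.pi * Complex.I) * (∏ k ∈ s, (ζ - q k))⁻¹) := by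
  classical
  revert hq
  induction hs using Finset.Nonempty.cons_induction with
  | singleton a =>
    intro hq
    have hqa : q a ∈ ball c r := hq a (Finset.mem_singleton_self a)
    have hζa : ζ - q a ≠ 0 := by
      refine sub_ne_zero.2 fun hcon => hζ ?_
      exact hcon ▸ ball_subset_closedBall hqa
    have key : EqOn (fun z => ((z - ζ) * ∏ k ∈ ({a} : Finset ℕ), (z - q k))⁻¹)
        (fun z => (ζ - q a)⁻¹ * ((z - ζ)⁻¹ - (z - q a)⁻¹)) (sphere c r) := by
      intro z hz
      have h1 : z - q a ≠ 0 := sub_ne_zero.2 (jbb_sphere_ne hz hqa)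
      have h2 : z - ζ ≠ 0 := sub_ne_zero.2 (jbb_sphere_ne' hz hζ)
      simp only [Finset.prod_singleton]
      field_simp
      try ring
    have hi1 : CircleIntegrable (fun z => (z - ζ)⁻¹) c r := by
      refine ContinuousOn.circleIntegrable hr.le ?_
      exact ContinuousOn.inv₀ (by fun_prop) fun z hz => sub_ne_zero.2 (jbb_sphere_ne' hz hζ)
    have hi2 : CircleIntegrable (fun z => (z - q a)⁻¹) c r := by
      refine ContinuousOn.circleIntegrable hr.le ?_
      exact ContinuousOn.inv₀ (by fun_prop) fun z hz => sub_ne_zero.2 (jbb_sphere_ne hz hqa)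
    rw [circleIntegral.integral_congr hr.le key, circleIntegral.integral_const_mul,
      circleIntegral.integral_sub hi1 hi2,
      circleIntegral.integral_sub_inv_of_mem_ball hqa]
    have hzero : (∮ z in C(c, r), (z - ζ)⁻¹) = 0 := by
      refine jbb_holo_zero hr.le (DifferentiableOn.inv ?_ ?_)
      · exact (differentiable_id.sub_const _).differentiableOn
      · exact fun z hz => sub_ne_zero.2 fun hcon => hζ (hcon ▸ hz)
    rw [hzero, zero_sub, Finset.prod_singleton]
    ring
  | cons a t hat ht ih =>
    intro hq
    have hqa : q a ∈ ball c r := hq a (Finset.mem_cons_self a t)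
    have hqt : ∀ k ∈ t, q k ∈ ball c r := fun k hk => hq k (Finset.mem_cons_of_mem hk)
    have hζa : ζ - q a ≠ 0 := by
      refine sub_ne_zero.2 fun hcon => hζ ?_
      exact hcon ▸ ball_subset_closedBall hqa
    have key : EqOn (fun z => ((z - ζ) * ∏ k ∈ Finset.cons a t hat, (z - q k))⁻¹)
        (fun z => (ζ - q a)⁻¹ * (((z - ζ) * ∏ k ∈ t, (z - q k))⁻¹
          - (∏ k ∈ Finset.cons a t hat, (z - q k))⁻¹)) (sphere c r) := by
      intro z hz
      have h1 : z - q a ≠ 0 := sub_ne_zero.2 (jbb_sphere_ne hz hqa)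
      have h2 : z - ζ ≠ 0 := sub_ne_zero.2 (jbb_sphere_ne' hz hζ)
      have h4 : ∏ k ∈ t, (z - q k) ≠ 0 :=
        Finset.prod_ne_zero_iff.2 fun k hk => sub_ne_zero.2 (jbb_sphere_ne hz (hqt k hk))
      simp only [Finset.prod_cons]
      field_simp
      try ring
    have hi1 : CircleIntegrable (fun z => ((z - ζ) * ∏ k ∈ t, (z - q k))⁻¹) c r := by
      refine ContinuousOn.circleIntegrable hr.le ?_
      refine ContinuousOn.inv₀ (by fun_prop) fun z hz => mul_ne_zero ?_ ?_
      · exact sub_ne_zero.2 (jbb_sphere_ne' hz hζ)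
      · exact Finset.prod_ne_zero_iff.2 fun k hk => sub_ne_zero.2 (jbb_sphere_ne hz (hqt k hk))
    have hi2 : CircleIntegrable (fun z => (∏ k ∈ Finset.cons a t hat, (z - q k))⁻¹) c r := by
      refine ContinuousOn.circleIntegrable hr.le ?_
      refine ContinuousOn.inv₀ (by fun_prop) fun z hz => Finset.prod_ne_zero_iff.2 ?_
      exact fun k hk => sub_ne_zero.2 (jbb_sphere_ne hz (hq k hk))
    rw [circleIntegral.integral_congr hr.le key, circleIntegral.integral_const_mul,
      circleIntegral.integral_sub hi1 hi2]
    have hzero : (∮ z in C(c, r), (∏ k ∈ Finset.cons a t hat, (z - q k))⁻¹) = 0 := by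
      refine jbb_prod_zero hr _ q ?_ fun k hk => hq k hk
      rw [Finset.card_cons]
      have := Finset.card_pos.2 ht
      omega
    rw [hzero, sub_zero, ih hqt, Finset.prod_cons, mul_inv]
    ring

lemma jbb_GST_diffOn (a b : ℕ → ℝ) (S T : Finset ℕ) (h : ℤ) {c : ℂ} {r : ℝ}
    (h0 : (0:ℂ) ∉ closedBall c r) (hT : ∀ k ∈ T, (a k : ℂ) ∉ closedBall c r) :
    DifferentiableOn ℂ (GST a b S T h) (closedBall c r) := by
  have hz0 : ∀ z ∈ closedBall c r, z ≠ (0:ℂ) := fun z hz hcon => h0 (hcon ▸ hz)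
  unfold GST
  refine DifferentiableOn.mul (DifferentiableOn.mul ?_ ?_) ?_
  · exact DifferentiableOn.zpow differentiableOn_id (Or.inl hz0)
  · exact DifferentiableOn.fun_finsetProd fun k _ =>
      (differentiable_id.sub_const _).differentiableOn
  · refine DifferentiableOn.fun_finsetProd fun k hk => DifferentiableOn.inv ?_ ?_
    · exact (differentiableOn_const _).sub
        ((differentiableOn_const _).div differentiableOn_id hz0)
    · intro z hz hcon
      have hza : z ≠ (a k : ℂ) := fun hcon' => hT k hk (hcon' ▸ hz)
      exact hza ((div_eq_one_iff_eq (hz0 z hz)).1 (sub_eq_zero.1 hcon).symm).symm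

lemma jbb_GST_ne_zero {a b : ℕ → ℝ} {S T : Finset ℕ} {h : ℤ} {z : ℂ}
    (hz0 : z ≠ 0) (hS : ∀ k ∈ S, z ≠ ((b k : ℂ))⁻¹) (hT : ∀ k ∈ T, z ≠ (a k : ℂ)) :
    GST a b S T h z ≠ 0 := by
  unfold GST
  refine mul_ne_zero (mul_ne_zero ?_ ?_) ?_
  · exact zpow_ne_zero _ hz0
  · exact Finset.prod_ne_zero_iff.2 fun k hk => sub_ne_zero.2 (hS k hk)
  · refine Finset.prod_ne_zero_iff.2 fun k hk => inv_ne_zero fun hcon => ?_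
    exact (hT k hk) ((div_eq_one_iff_eq hz0).1 (sub_eq_zero.1 hcon).symm).symm

lemma jbb_prod_split (f : ℕ → ℂ) {u v w : ℕ} (h1 : u ≤ v) (h2 : v ≤ w) :
    (∏ k ∈ Finset.Icc (u+1) v, f k) * ∏ k ∈ Finset.Icc (v+1) w, f k
      = ∏ k ∈ Finset.Icc (u+1) w, f k := by
  simp only [Finset.Icc_add_one_left_eq_Ioc]
  exact Finset.prod_Ioc_consecutive f h1 h2

set_option maxHeartbeats 2000000 in
/-- The term `J_{b,b}` from the orthogonalization in the proof of Theorem 3.4 equals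
`1{i = j, i ≤ n}`.  The four contours are counterclockwise circles encircling all the
points `1/b_k` and none of `0, a_1, …, a_M`, nested so that the `z`-contour contains
the `w`-contour, which contains the `ζ`-contour, which contains the `ω`-contour. -/
theorem Jbb_eq_indicator
    (N M : ℕ) (hN : 1 ≤ N) (hM : 1 ≤ M)
    (n m : ℕ) (hn1 : 1 ≤ n) (hnN : n < N) (hm1 : 1 ≤ m) (hmM : m < M)
    (h H : ℤ)
    (a b : ℕ → ℝ)
    (ha : ∀ i, 1 ≤ i → i ≤ M → 0 ≤ a i ∧ a i ≤ 1)
    (hb : ∀ j, 1 ≤ j → j ≤ N → 0 < b j ∧ b j ≤ 1)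
    (hab : ∀ i j, 1 ≤ i → i ≤ M → 1 ≤ j → j ≤ N → 0 < a i * b j ∧ a i * b j < 1)
    -- the `z`-contour
    (cz : ℂ) (rz : ℝ) (hrz : 0 < rz)
    (hz_in : ∀ k, 1 ≤ k → k ≤ N → ‖(((b k : ℂ))⁻¹ - cz)‖ < rz)
    (hz_out0 : rz < ‖cz‖)
    (hz_outa : ∀ k, 1 ≤ k → k ≤ M → rz < ‖((a k : ℂ) - cz)‖)
    -- the `w`-contour
    (cw : ℂ) (rw : ℝ) (hrw : 0 < rw)
    (hw_in : ∀ k, 1 ≤ k → k ≤ N → ‖(((b k : ℂ))⁻¹ - cw)‖ < rw)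
    (hw_out0 : rw < ‖cw‖)
    (hw_outa : ∀ k, 1 ≤ k → k ≤ M → rw < ‖((a k : ℂ) - cw)‖)
    -- the `ζ`-contour
    (cζ : ℂ) (rζ : ℝ) (hrζ : 0 < rζ)
    (hζ_in : ∀ k, 1 ≤ k → k ≤ N → ‖(((b k : ℂ))⁻¹ - cζ)‖ < rζ)
    (hζ_out0 : rζ < ‖cζ‖)
    (hζ_outa : ∀ k, 1 ≤ k → k ≤ M → rζ < ‖((a k : ℂ) - cζ)‖)
    -- the `ω`-contour
    (cω : ℂ) (rω : ℝ) (hrω : 0 < rω)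
    (hω_in : ∀ k, 1 ≤ k → k ≤ N → ‖(((b k : ℂ))⁻¹ - cω)‖ < rω)
    (hω_out0 : rω < ‖cω‖)
    (hω_outa : ∀ k, 1 ≤ k → k ≤ M → rω < ‖((a k : ℂ) - cω)‖)
    -- nesting: z-contour ⊃ w-contour ⊃ ζ-contour ⊃ ω-contour
    (hzw : ‖(cz - cw)‖ + rw < rz)
    (hwζ : ‖(cw - cζ)‖ + rζ < rw)
    (hζω : ‖(cζ - cω)‖ + rω < rζ)
    (i j : ℕ) (hi1 : 1 ≤ i) (hiN : i ≤ N) (hj1 : 1 ≤ j) (hjN : j ≤ N) :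
    ((2 * (Real.pi : ℂ) * Complex.I)⁻¹ ^ 4 *
        ∮ ζ in C(cζ, rζ), ∮ ω in C(cω, rω), ∮ z in C(cz, rz), ∮ w in C(cw, rw),
          GST a b (Finset.Icc 1 n) (Finset.Icc 1 m) (h - 1) z
            * GST a b (Finset.Icc (n + 1) N) (Finset.Icc (m + 1) M) (H - h) w
            / (GST a b (Finset.Icc 1 i) (Finset.Icc 1 m) (h - 1) ζ
                * GST a b (Finset.Icc j N) (Finset.Icc (m + 1) M) (H - h) ω
                * (z - w) * (z - ζ) * (w - ω)))
      = if i = j ∧ i ≤ n then 1 else 0 := by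
  classical
  set tπ : ℂ := 2 * (Real.pi : ℂ) * Complex.I with htπ
  have hπ : tπ ≠ 0 := by
    refine mul_ne_zero (mul_ne_zero two_ne_zero ?_) Complex.I_ne_zero
    exact_mod_cast Real.pi_ne_zero
  set β : ℕ → ℂ := fun k => ((b k : ℂ))⁻¹ with hβ
  set Gz := GST a b (Finset.Icc 1 n) (Finset.Icc 1 m) (h - 1) with hGzdef
  set Gw := GST a b (Finset.Icc (n + 1) N) (Finset.Icc (m + 1) M) (H - h) with hGwdef
  set Gv := GST a b (Finset.Icc 1 i) (Finset.Icc 1 m) (h - 1) with hGvdef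
  set Go := GST a b (Finset.Icc j N) (Finset.Icc (m + 1) M) (H - h) with hGodef
  set G1 := GST a b (Finset.Icc 1 (j - 1)) (Finset.Icc 1 m) (h - 1) with hG1def
  -- β points inside each circle
  have hβz : ∀ k ∈ Finset.Icc 1 N, β k ∈ ball cz rz := by
    intro k hk
    rw [mem_ball, Complex.dist_eq]
    exact hz_in k (Finset.mem_Icc.1 hk).1 (Finset.mem_Icc.1 hk).2
  have hβw : ∀ k ∈ Finset.Icc 1 N, β k ∈ ball cw rw := by
    intro k hk
    rw [mem_ball, Complex.dist_eq]
    exact hw_in k (Finset.mem_Icc.1 hk).1 (Finset.mem_Icc.1 hk).2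
  have hβζ : ∀ k ∈ Finset.Icc 1 N, β k ∈ ball cζ rζ := by
    intro k hk
    rw [mem_ball, Complex.dist_eq]
    exact hζ_in k (Finset.mem_Icc.1 hk).1 (Finset.mem_Icc.1 hk).2
  have hβω : ∀ k ∈ Finset.Icc 1 N, β k ∈ ball cω rω := by
    intro k hk
    rw [mem_ball, Complex.dist_eq]
    exact hω_in k (Finset.mem_Icc.1 hk).1 (Finset.mem_Icc.1 hk).2
  -- 0 outside each closed disc
  have h0z : (0 : ℂ) ∉ closedBall cz rz := by
    rw [mem_closedBall, dist_comm, Complex.dist_eq, sub_zero, not_le]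
    exact hz_out0
  have h0w : (0 : ℂ) ∉ closedBall cw rw := by
    rw [mem_closedBall, dist_comm, Complex.dist_eq, sub_zero, not_le]
    exact hw_out0
  have h0ζ : (0 : ℂ) ∉ closedBall cζ rζ := by
    rw [mem_closedBall, dist_comm, Complex.dist_eq, sub_zero, not_le]
    exact hζ_out0
  have h0ω : (0 : ℂ) ∉ closedBall cω rω := by
    rw [mem_closedBall, dist_comm, Complex.dist_eq, sub_zero, not_le]
    exact hω_out0
  -- the points a k outside each closed disc
  have haz : ∀ k ∈ Finset.Icc 1 M, (a k : ℂ) ∉ closedBall cz rz := by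
    intro k hk
    rw [mem_closedBall, Complex.dist_eq, not_le]
    exact hz_outa k (Finset.mem_Icc.1 hk).1 (Finset.mem_Icc.1 hk).2
  have haw : ∀ k ∈ Finset.Icc 1 M, (a k : ℂ) ∉ closedBall cw rw := by
    intro k hk
    rw [mem_closedBall, Complex.dist_eq, not_le]
    exact hw_outa k (Finset.mem_Icc.1 hk).1 (Finset.mem_Icc.1 hk).2
  have haζ : ∀ k ∈ Finset.Icc 1 M, (a k : ℂ) ∉ closedBall cζ rζ := by
    intro k hk
    rw [mem_closedBall, Complex.dist_eq, not_le]
    exact hζ_outa k (Finset.mem_Icc.1 hk).1 (Finset.mem_Icc.1 hk).2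
  have haω : ∀ k ∈ Finset.Icc 1 M, (a k : ℂ) ∉ closedBall cω rω := by
    intro k hk
    rw [mem_closedBall, Complex.dist_eq, not_le]
    exact hω_outa k (Finset.mem_Icc.1 hk).1 (Finset.mem_Icc.1 hk).2
  -- nesting of discs
  have hd_zw : dist cw cz + rw < rz := by rw [dist_comm, Complex.dist_eq]; exact hzw
  have hd_wζ : dist cζ cw + rζ < rw := by rw [dist_comm, Complex.dist_eq]; exact hwζ
  have hd_ζω : dist cω cζ + rω < rζ := by rw [dist_comm, Complex.dist_eq]; exact hζω
  have hcb_ζw : ∀ x ∈ closedBall cζ rζ, x ∈ ball cw rw := by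
    intro x hx
    rw [mem_closedBall] at hx
    rw [mem_ball]
    calc dist x cw ≤ dist x cζ + dist cζ cw := dist_triangle _ _ _
      _ < rw := by linarith
  have hcb_wz : ∀ x ∈ closedBall cw rw, x ∈ ball cz rz := by
    intro x hx
    rw [mem_closedBall] at hx
    rw [mem_ball]
    calc dist x cz ≤ dist x cw + dist cw cz := dist_triangle _ _ _
      _ < rz := by linarith
  have hcb_ωζ : ∀ x ∈ closedBall cω rω, x ∈ ball cζ rζ := by
    intro x hx
    rw [mem_closedBall] at hx
    rw [mem_ball]
    calc dist x cζ ≤ dist x cω + dist cω cζ := dist_triangle _ _ _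
      _ < rζ := by linarith
  have hcb_ζz : ∀ x ∈ closedBall cζ rζ, x ∈ ball cz rz := fun x hx =>
    hcb_wz x (ball_subset_closedBall (hcb_ζw x hx))
  have hcb_ωw : ∀ x ∈ closedBall cω rω, x ∈ ball cw rw := fun x hx =>
    hcb_ζw x (ball_subset_closedBall (hcb_ωζ x hx))
  have hcb_ωz : ∀ x ∈ closedBall cω rω, x ∈ ball cz rz := fun x hx =>
    hcb_wz x (ball_subset_closedBall (hcb_ωw x hx))
  have hz_not_cbw : ∀ z ∈ sphere cz rz, z ∉ closedBall cw rw := by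
    intro z hz hcon
    have := hcb_wz z hcon
    rw [mem_ball] at this
    rw [mem_sphere] at hz
    linarith
  have hζ_not_cbω : ∀ x ∈ sphere cζ rζ, x ∉ closedBall cω rω := by
    intro x hx hcon
    have := hcb_ωζ x hcon
    rw [mem_ball] at this
    rw [mem_sphere] at hx
    linarith
  -- restricted a-point facts
  have hsub_am : Finset.Icc 1 m ⊆ Finset.Icc 1 M := by
    intro k hk
    rw [Finset.mem_Icc] at *
    omega
  have hsub_am' : Finset.Icc (m + 1) M ⊆ Finset.Icc 1 M := by
    intro k hk
    rw [Finset.mem_Icc] at *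
    omega
  -- differentiability of the G's
  have hGz_diff : DifferentiableOn ℂ Gz (closedBall cz rz) :=
    jbb_GST_diffOn a b _ _ _ h0z fun k hk => haz k (hsub_am hk)
  have hGw_diff : DifferentiableOn ℂ Gw (closedBall cw rw) :=
    jbb_GST_diffOn a b _ _ _ h0w fun k hk => haw k (hsub_am' hk)
  have hGzω_diff : DifferentiableOn ℂ Gz (closedBall cω rω) :=
    jbb_GST_diffOn a b _ _ _ h0ω fun k hk => haω k (hsub_am hk)
  have hG1ω_diff : DifferentiableOn ℂ G1 (closedBall cω rω) :=
    jbb_GST_diffOn a b _ _ _ h0ω fun k hk => haω k (hsub_am hk)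
  -- nonvanishing of the G's on the relevant spheres
  have hGv_ne : ∀ x ∈ sphere cζ rζ, Gv x ≠ 0 := by
    intro x hx
    refine jbb_GST_ne_zero (jbb_sphere_ne' hx h0ζ) ?_ ?_
    · intro k hk
      refine jbb_sphere_ne hx (hβζ k ?_)
      rw [Finset.mem_Icc] at *
      omega
    · exact fun k hk => jbb_sphere_ne' hx (haζ k (hsub_am hk))
  have hGo_ne : ∀ x ∈ sphere cω rω, Go x ≠ 0 := by
    intro x hx
    refine jbb_GST_ne_zero (jbb_sphere_ne' hx h0ω) ?_ ?_
    · intro k hk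
      refine jbb_sphere_ne hx (hβω k ?_)
      rw [Finset.mem_Icc] at *
      omega
    · exact fun k hk => jbb_sphere_ne' hx (haω k (hsub_am' hk))
  have hGw_ne : ∀ x ∈ sphere cω rω, Gw x ≠ 0 := by
    intro x hx
    refine jbb_GST_ne_zero (jbb_sphere_ne' hx h0ω) ?_ ?_
    · intro k hk
      refine jbb_sphere_ne hx (hβω k ?_)
      rw [Finset.mem_Icc] at *
      omega
    · exact fun k hk => jbb_sphere_ne' hx (haω k (hsub_am' hk))
  -- STEP W : innermost integral
  have stepW : ∀ ζ ∈ sphere cζ rζ, ∀ ω ∈ sphere cω rω, ∀ z ∈ sphere cz rz,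
      (∮ w in C(cw, rw), Gz z * Gw w / (Gv ζ * Go ω * (z - w) * (z - ζ) * (w - ω)))
        = tπ * (Gz z * Gw ω / (Gv ζ * Go ω * (z - ω) * (z - ζ))) := by
    intro ζ hζs ω hωs z hzs
    have hωball : ω ∈ ball cw rw := hcb_ωw ω (sphere_subset_closedBall hωs)
    have hfd : DifferentiableOn ℂ
        (fun w => Gz z * Gw w / (Gv ζ * Go ω * (z - w) * (z - ζ))) (closedBall cw rw) := by
      refine DifferentiableOn.congr
        (f := fun w => (Gz z * ((Gv ζ * Go ω) * (z - ζ))⁻¹) * (Gw w * (z - w)⁻¹)) ?_ ?_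
      · refine (differentiableOn_const _).mul (hGw_diff.mul ?_)
        refine DifferentiableOn.inv ((differentiableOn_const _).sub differentiableOn_id) ?_
        intro x hx
        exact sub_ne_zero.2 fun hcon => (hz_not_cbw z hzs) (hcon ▸ hx)
      · intro w _
        simp only [div_eq_mul_inv, mul_inv]
        ring
    have hre : (fun w => Gz z * Gw w / (Gv ζ * Go ω * (z - w) * (z - ζ) * (w - ω)))
        = fun w => (Gz z * Gw w / (Gv ζ * Go ω * (z - w) * (z - ζ))) / (w - ω) := by
      funext w
      rw [div_div]
    rw [hre, jbb_cauchy_div hfd hωball]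
  -- STEP Z
  have stepZ : ∀ ζ ∈ sphere cζ rζ, ∀ ω ∈ sphere cω rω,
      (∮ z in C(cz, rz), ∮ w in C(cw, rw),
          Gz z * Gw w / (Gv ζ * Go ω * (z - w) * (z - ζ) * (w - ω)))
        = tπ * tπ * (Gw ω / (Gv ζ * Go ω)) * ((Gz ω - Gz ζ) / (ω - ζ)) := by
    intro ζ hζs ω hωs
    have hζball : ζ ∈ ball cz rz := hcb_ζz ζ (sphere_subset_closedBall hζs)
    have hωball : ω ∈ ball cz rz := hcb_ωz ω (sphere_subset_closedBall hωs)
    have hωζ_ne : ω ≠ ζ :=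
      (jbb_sphere_ne hζs (hcb_ωζ ω (sphere_subset_closedBall hωs))).symm
    rw [circleIntegral.integral_congr hrz.le fun z hz => stepW ζ hζs ω hωs z hz]
    have hre : (fun z => tπ * (Gz z * Gw ω / (Gv ζ * Go ω * (z - ω) * (z - ζ))))
        = fun z => (tπ * (Gw ω / (Gv ζ * Go ω))) * (Gz z / ((z - ω) * (z - ζ))) := by
      funext z
      simp only [div_eq_mul_inv, mul_inv]
      ring
    rw [hre, circleIntegral.integral_const_mul,
      jbb_two_poles hrz.le hGz_diff hωball hζball hωζ_ne]
    ring
  -- product splitting identities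
  have e_zw : ∀ x : ℂ, Gw x * Gz x = G1 x * Go x := by
    intro x
    have e1 : (∏ k ∈ Finset.Icc 1 n, (x - β k)) * ∏ k ∈ Finset.Icc (n + 1) N, (x - β k)
        = ∏ k ∈ Finset.Icc 1 N, (x - β k) := by
      have := jbb_prod_split (fun k => x - β k) (u := 0) (v := n) (w := N)
        (by omega) (by omega)
      simpa using this
    have e2 : (∏ k ∈ Finset.Icc 1 (j - 1), (x - β k)) * ∏ k ∈ Finset.Icc j N, (x - β k)
        = ∏ k ∈ Finset.Icc 1 N, (x - β k) := by
      have := jbb_prod_split (fun k => x - β k) (u := 0) (v := j - 1) (w := N)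
        (by omega) (by omega)
      rw [show j - 1 + 1 = j by omega] at this
      simpa using this
    simp only [hβ] at e1 e2
    simp only [hGzdef, hGwdef, hG1def, hGodef, GST, hβ]
    linear_combination (x ^ (H - h) * x ^ (h - 1) *
        (∏ k ∈ Finset.Icc (m + 1) M, (1 - (a k : ℂ) / x)⁻¹) *
        (∏ k ∈ Finset.Icc 1 m, (1 - (a k : ℂ) / x)⁻¹)) * (e1 - e2)
  -- STEP Ω and final, by cases
  by_cases hjn : j ≤ n
  · -- the interesting case
    have e_ratio : ∀ x : ℂ, Gw x * ∏ k ∈ Finset.Icc j n, (x - β k) = Go x := by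
      intro x
      have e3 : (∏ k ∈ Finset.Icc j n, (x - β k)) * ∏ k ∈ Finset.Icc (n + 1) N, (x - β k)
          = ∏ k ∈ Finset.Icc j N, (x - β k) := by
        have := jbb_prod_split (fun k => x - β k) (u := j - 1) (v := n) (w := N)
          (by omega) (by omega)
        rw [show j - 1 + 1 = j by omega] at this
        exact this
      simp only [hβ] at e3
      simp only [hGwdef, hGodef, GST, hβ]
      linear_combination (x ^ (H - h) *
        ∏ k ∈ Finset.Icc (m + 1) M, (1 - (a k : ℂ) / x)⁻¹) * e3
    have stepO : ∀ ζ ∈ sphere cζ rζ,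
        (∮ ω in C(cω, rω), ∮ z in C(cz, rz), ∮ w in C(cw, rw),
            Gz z * Gw w / (Gv ζ * Go ω * (z - w) * (z - ζ) * (w - ω)))
          = tπ * tπ * tπ *
              (Gz ζ * (Gv ζ)⁻¹ * (∏ k ∈ Finset.Icc j n, (ζ - β k))⁻¹) := by
      intro ζ hζs
      have hζ_out : ζ ∉ closedBall cω rω := hζ_not_cbω ζ hζs
      have key : EqOn (fun ω => ∮ z in C(cz, rz), ∮ w in C(cw, rw),
            Gz z * Gw w / (Gv ζ * Go ω * (z - w) * (z - ζ) * (w - ω)))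
          (fun ω => (tπ * tπ * (Gv ζ)⁻¹) *
            (G1 ω / (ω - ζ) -
              Gz ζ * ((ω - ζ) * ∏ k ∈ Finset.Icc j n, (ω - β k))⁻¹))
          (sphere cω rω) := by
        intro ω hωs
        have hGone := hGo_ne ω hωs
        have hGwne := hGw_ne ω hωs
        have hP_ne : (∏ k ∈ Finset.Icc j n, (ω - β k)) ≠ 0 := by
          refine Finset.prod_ne_zero_iff.2 fun k hk => sub_ne_zero.2 ?_
          refine jbb_sphere_ne hωs (hβω k ?_)
          rw [Finset.mem_Icc] at *
          omega
        have hωζ : ω - ζ ≠ 0 := sub_ne_zero.2 (jbb_sphere_ne' hωs hζ_out)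
        have hGvζ : Gv ζ ≠ 0 := hGv_ne ζ hζs
        dsimp only
        rw [stepZ ζ hζs ω hωs]
        have q2 : Gw ω / Go ω = (∏ k ∈ Finset.Icc j n, (ω - β k))⁻¹ := by
          rw [← e_ratio ω]
          field_simp
        have q1 : Gw ω * Gz ω / Go ω = G1 ω := by
          rw [div_eq_iff hGone]
          linear_combination e_zw ω
        have expand : tπ * tπ * (Gw ω / (Gv ζ * Go ω)) * ((Gz ω - Gz ζ) / (ω - ζ))
            = (tπ * tπ * (Gv ζ)⁻¹) *
              ((Gw ω * Gz ω / Go ω) / (ω - ζ) - Gz ζ * ((Gw ω / Go ω) * (ω - ζ)⁻¹)) := by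
          field_simp
        rw [expand, q1, q2, mul_inv]
        ring
      rw [circleIntegral.integral_congr hrω.le key, circleIntegral.integral_const_mul]
      have hP_sub : Finset.Icc j n ⊆ Finset.Icc 1 N := by
        intro k hk
        rw [Finset.mem_Icc] at *
        omega
      have hi1 : CircleIntegrable (fun ω => G1 ω / (ω - ζ)) cω rω := by
        refine ContinuousOn.circleIntegrable hrω.le ?_
        refine ContinuousOn.div
          (hG1ω_diff.continuousOn.mono sphere_subset_closedBall) (by fun_prop) ?_
        exact fun x hx => sub_ne_zero.2 (jbb_sphere_ne' hx hζ_out)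
      have hi2 : CircleIntegrable
          (fun ω => Gz ζ * ((ω - ζ) * ∏ k ∈ Finset.Icc j n, (ω - β k))⁻¹) cω rω := by
        refine ContinuousOn.circleIntegrable hrω.le
          (ContinuousOn.mul continuousOn_const (ContinuousOn.inv₀ ?_ ?_))
        · exact ContinuousOn.mul (by fun_prop)
            (Continuous.continuousOn (continuous_finset_prod _ fun k _ =>
              (continuous_id.sub continuous_const)))
        · intro x hx
          refine mul_ne_zero (sub_ne_zero.2 (jbb_sphere_ne' hx hζ_out)) ?_
          exact Finset.prod_ne_zero_iff.2 fun k hk =>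
            sub_ne_zero.2 (jbb_sphere_ne hx (hβω k (hP_sub hk)))
      rw [circleIntegral.integral_sub hi1 hi2]
      have hz1 : (∮ ω in C(cω, rω), G1 ω / (ω - ζ)) = 0 := by
        refine jbb_holo_zero hrω.le (DifferentiableOn.div hG1ω_diff
          ((differentiable_id.sub_const _).differentiableOn) ?_)
        exact fun x hx => sub_ne_zero.2 fun hcon => hζ_out (hcon ▸ hx)
      have hz2 : (∮ ω in C(cω, rω),
          Gz ζ * ((ω - ζ) * ∏ k ∈ Finset.Icc j n, (ω - β k))⁻¹)
            = Gz ζ * -(tπ * (∏ k ∈ Finset.Icc j n, (ζ - β k))⁻¹) := by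
        rw [circleIntegral.integral_const_mul,
          jbb_L hrω hζ_out (Finset.Icc j n) β (Finset.nonempty_Icc.2 hjn)
            (fun k hk => hβω k (hP_sub hk))]
      rw [hz1, hz2]
      ring
    -- now the outermost integral
    rw [circleIntegral.integral_congr hrζ.le fun ζ hζs => stepO ζ hζs]
    -- the master algebraic identity
    have D1 : ∀ x : ℂ, Gz x * ∏ k ∈ Finset.Icc 1 i, (x - β k)
        = Gv x * ∏ k ∈ Finset.Icc 1 n, (x - β k) := by
      intro x
      simp only [hGzdef, hGvdef, GST, hβ]
      ring
    have hsubN : ∀ u v : ℕ, 1 ≤ u → v ≤ N → Finset.Icc u v ⊆ Finset.Icc 1 N := by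
      intro u v hu hv k hk
      rw [Finset.mem_Icc] at *
      omega
    have hprodζ : ∀ (s : Finset ℕ), s ⊆ Finset.Icc 1 N → ∀ x ∈ sphere cζ rζ,
        (∏ k ∈ s, (x - β k)) ≠ 0 := by
      intro s hs x hx
      exact Finset.prod_ne_zero_iff.2 fun k hk =>
        sub_ne_zero.2 (jbb_sphere_ne hx (hβζ k (hs hk)))
    rcases lt_trichotomy i j with hij | hij | hij
    · -- i < j : inner value is a polynomial, integral 0
      have key2 : EqOn
          (fun ζ => tπ * tπ * tπ * (Gz ζ * (Gv ζ)⁻¹ * (∏ k ∈ Finset.Icc j n, (ζ - β k))⁻¹))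
          (fun ζ => tπ * tπ * tπ * ∏ k ∈ Finset.Icc (i+1) (j-1), (ζ - β k))
          (sphere cζ rζ) := by
        intro ζ hζs
        have hGvζ : Gv ζ ≠ 0 := hGv_ne ζ hζs
        have hP1 := hprodζ (Finset.Icc 1 i) (hsubN 1 i le_rfl hiN) ζ hζs
        have hPjn := hprodζ (Finset.Icc j n) (hsubN j n hj1 (by omega)) ζ hζs
        have sB : (∏ k ∈ Finset.Icc 1 i, (ζ - β k)) * ∏ k ∈ Finset.Icc (i+1) n, (ζ - β k)
            = ∏ k ∈ Finset.Icc 1 n, (ζ - β k) := by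
          have := jbb_prod_split (fun k => ζ - β k) (u := 0) (v := i) (w := n) (by omega) (by omega)
          simpa using this
        have sA : (∏ k ∈ Finset.Icc (i+1) (j-1), (ζ - β k)) * ∏ k ∈ Finset.Icc j n, (ζ - β k)
            = ∏ k ∈ Finset.Icc (i+1) n, (ζ - β k) := by
          have := jbb_prod_split (fun k => ζ - β k) (u := i) (v := j - 1) (w := n)
            (by omega) (by omega)
          rw [show j - 1 + 1 = j by omega] at this
          exact this
        have hmain : Gz ζ * (∏ k ∈ Finset.Icc 1 i, (ζ - β k))
            = (Gv ζ * (∏ k ∈ Finset.Icc (i+1) (j-1), (ζ - β k))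
                * ∏ k ∈ Finset.Icc j n, (ζ - β k)) * (∏ k ∈ Finset.Icc 1 i, (ζ - β k)) := by
          linear_combination D1 ζ - Gv ζ * sB
            - Gv ζ * (∏ k ∈ Finset.Icc 1 i, (ζ - β k)) * sA
        have hGzval : Gz ζ = Gv ζ * (∏ k ∈ Finset.Icc (i+1) (j-1), (ζ - β k))
            * ∏ k ∈ Finset.Icc j n, (ζ - β k) :=
          mul_right_cancel₀ hP1 hmain
        dsimp only
        rw [hGzval]
        field_simp
      rw [circleIntegral.integral_congr hrζ.le key2]
      have hz0' : (∮ ζ in C(cζ, rζ),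
          tπ * tπ * tπ * ∏ k ∈ Finset.Icc (i+1) (j-1), (ζ - β k)) = 0 := by
        refine jbb_holo_zero hrζ.le (DifferentiableOn.mul (differentiableOn_const _) ?_)
        exact DifferentiableOn.fun_finsetProd fun k _ =>
          (differentiable_id.sub_const _).differentiableOn
      rw [hz0', mul_zero, if_neg]
      rintro ⟨rfl, -⟩
      omega
    · -- i = j : the surviving case
      subst hij
      have hin : i ≤ n := hjn
      have key2 : EqOn
          (fun ζ => tπ * tπ * tπ * (Gz ζ * (Gv ζ)⁻¹ * (∏ k ∈ Finset.Icc i n, (ζ - β k))⁻¹))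
          (fun ζ => tπ * tπ * tπ * (ζ - β i)⁻¹) (sphere cζ rζ) := by
        intro ζ hζs
        have hGvζ : Gv ζ ≠ 0 := hGv_ne ζ hζs
        have hP1 := hprodζ (Finset.Icc 1 i) (hsubN 1 i le_rfl hiN) ζ hζs
        have hPin := hprodζ (Finset.Icc i n) (hsubN i n hi1 (le_of_lt hnN)) ζ hζs
        have hβi : ζ - β i ≠ 0 := by
          refine sub_ne_zero.2 (jbb_sphere_ne hζs (hβζ i ?_))
          rw [Finset.mem_Icc]
          omega
        have s1 : (∏ k ∈ Finset.Icc 1 i, (ζ - β k)) * ∏ k ∈ Finset.Icc (i+1) n, (ζ - β k)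
            = ∏ k ∈ Finset.Icc 1 n, (ζ - β k) := by
          have := jbb_prod_split (fun k => ζ - β k) (u := 0) (v := i) (w := n) (by omega) (by omega)
          simpa using this
        have s2 : (ζ - β i) * ∏ k ∈ Finset.Icc (i+1) n, (ζ - β k)
            = ∏ k ∈ Finset.Icc i n, (ζ - β k) := by
          have := jbb_prod_split (fun k => ζ - β k) (u := i - 1) (v := i) (w := n)
            (by omega) (by omega)
          rw [show i - 1 + 1 = i by omega] at this
          rw [Finset.Icc_self, Finset.prod_singleton] at this
          exact this
        have hmain : Gz ζ * (ζ - β i) * (∏ k ∈ Finset.Icc 1 i, (ζ - β k))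
            = (Gv ζ * (∏ k ∈ Finset.Icc i n, (ζ - β k)) * (∏ k ∈ Finset.Icc 1 i, (ζ - β k))) := by
          linear_combination (ζ - β i) * D1 ζ
            - ((ζ - β i) * Gv ζ) * s1 + (Gv ζ * (∏ k ∈ Finset.Icc 1 i, (ζ - β k))) * s2
        have hGzval : Gz ζ * (ζ - β i) = Gv ζ * ∏ k ∈ Finset.Icc i n, (ζ - β k) :=
          mul_right_cancel₀ hP1 hmain
        dsimp only
        field_simp
        linear_combination hGzval
      rw [circleIntegral.integral_congr hrζ.le key2]
      have hβiball : β i ∈ ball cζ rζ := by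
        refine hβζ i ?_
        rw [Finset.mem_Icc]
        omega
      have : (fun ζ => tπ * tπ * tπ * (ζ - β i)⁻¹) = fun ζ => tπ * tπ * tπ * (ζ - β i)⁻¹ := rfl
      rw [circleIntegral.integral_const_mul,
        circleIntegral.integral_sub_inv_of_mem_ball hβiball, if_pos ⟨rfl, hin⟩]
      field_simp [htπ]
      ring
    · -- i > j : integral of an inverse of at least two factors, zero
      have key2 : EqOn
          (fun ζ => tπ * tπ * tπ * (Gz ζ * (Gv ζ)⁻¹ * (∏ k ∈ Finset.Icc j n, (ζ - β k))⁻¹))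
          (fun ζ => tπ * tπ * tπ * (∏ k ∈ Finset.Icc j i, (ζ - β k))⁻¹) (sphere cζ rζ) := by
        intro ζ hζs
        have hGvζ : Gv ζ ≠ 0 := hGv_ne ζ hζs
        have hP1 := hprodζ (Finset.Icc 1 i) (hsubN 1 i le_rfl hiN) ζ hζs
        have hPjn := hprodζ (Finset.Icc j n) (hsubN j n hj1 (le_of_lt hnN)) ζ hζs
        have hPji := hprodζ (Finset.Icc j i) (hsubN j i hj1 hiN) ζ hζs
        have hPj1 := hprodζ (Finset.Icc 1 (j-1)) (hsubN 1 (j-1) le_rfl (by omega)) ζ hζs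
        have sC : (∏ k ∈ Finset.Icc 1 (j-1), (ζ - β k)) * ∏ k ∈ Finset.Icc j i, (ζ - β k)
            = ∏ k ∈ Finset.Icc 1 i, (ζ - β k) := by
          have := jbb_prod_split (fun k => ζ - β k) (u := 0) (v := j - 1) (w := i)
            (by omega) (by omega)
          rw [show j - 1 + 1 = j by omega] at this
          simpa using this
        have sD : (∏ k ∈ Finset.Icc 1 (j-1), (ζ - β k)) * ∏ k ∈ Finset.Icc j n, (ζ - β k)
            = ∏ k ∈ Finset.Icc 1 n, (ζ - β k) := by
          have := jbb_prod_split (fun k => ζ - β k) (u := 0) (v := j - 1) (w := n)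
            (by omega) (by omega)
          rw [show j - 1 + 1 = j by omega] at this
          simpa using this
        have hmain : Gz ζ * (∏ k ∈ Finset.Icc j i, (ζ - β k))
              * (∏ k ∈ Finset.Icc 1 (j-1), (ζ - β k))
            = (Gv ζ * ∏ k ∈ Finset.Icc j n, (ζ - β k))
              * (∏ k ∈ Finset.Icc 1 (j-1), (ζ - β k)) := by
          linear_combination Gz ζ * sC + D1 ζ - Gv ζ * sD
        have hGzval : Gz ζ * ∏ k ∈ Finset.Icc j i, (ζ - β k)
            = Gv ζ * ∏ k ∈ Finset.Icc j n, (ζ - β k) :=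
          mul_right_cancel₀ hPj1 hmain
        dsimp only
        field_simp
        linear_combination hGzval
      rw [circleIntegral.integral_congr hrζ.le key2, circleIntegral.integral_const_mul]
      have hz0' : (∮ ζ in C(cζ, rζ), (∏ k ∈ Finset.Icc j i, (ζ - β k))⁻¹) = 0 := by
        refine jbb_prod_zero hrζ (Finset.Icc j i) β ?_ ?_
        · rw [Nat.card_Icc]
          omega
        · exact fun k hk => hβζ k (hsubN j i hj1 hiN hk)
      rw [hz0', mul_zero, mul_zero, if_neg]
      rintro ⟨rfl, -⟩
      omega
  · -- case j > n : everything vanishes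
    push_neg at hjn
    have e_ratio' : ∀ x : ℂ, Gw x = Go x * ∏ k ∈ Finset.Icc (n+1) (j-1), (x - β k) := by
      intro x
      have e3 : (∏ k ∈ Finset.Icc (n+1) (j-1), (x - β k)) * ∏ k ∈ Finset.Icc j N, (x - β k)
          = ∏ k ∈ Finset.Icc (n+1) N, (x - β k) := by
        have := jbb_prod_split (fun k => x - β k) (u := n) (v := j - 1) (w := N)
          (by omega) (by omega)
        rw [show j - 1 + 1 = j by omega] at this
        exact this
      simp only [hβ] at e3
      simp only [hGwdef, hGodef, GST, hβ]
      linear_combination (-(x ^ (H - h) *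
        ∏ k ∈ Finset.Icc (m + 1) M, (1 - (a k : ℂ) / x)⁻¹)) * e3
    have stepO : ∀ ζ ∈ sphere cζ rζ,
        (∮ ω in C(cω, rω), ∮ z in C(cz, rz), ∮ w in C(cw, rw),
            Gz z * Gw w / (Gv ζ * Go ω * (z - w) * (z - ζ) * (w - ω))) = 0 := by
      intro ζ hζs
      have hζ_out : ζ ∉ closedBall cω rω := hζ_not_cbω ζ hζs
      have key : EqOn (fun ω => ∮ z in C(cz, rz), ∮ w in C(cw, rw),
            Gz z * Gw w / (Gv ζ * Go ω * (z - w) * (z - ζ) * (w - ω)))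
          (fun ω => (tπ * tπ * (Gv ζ)⁻¹) *
            (G1 ω / (ω - ζ) -
              Gz ζ * ((∏ k ∈ Finset.Icc (n+1) (j-1), (ω - β k)) * (ω - ζ)⁻¹)))
          (sphere cω rω) := by
        intro ω hωs
        have hGone := hGo_ne ω hωs
        have hGwne := hGw_ne ω hωs
        have hωζ : ω - ζ ≠ 0 := sub_ne_zero.2 (jbb_sphere_ne' hωs hζ_out)
        have hGvζ : Gv ζ ≠ 0 := hGv_ne ζ hζs
        dsimp only
        rw [stepZ ζ hζs ω hωs]
        have q2 : Gw ω / Go ω = ∏ k ∈ Finset.Icc (n+1) (j-1), (ω - β k) := by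
          rw [e_ratio' ω]
          field_simp
        have q1 : Gw ω * Gz ω / Go ω = G1 ω := by
          rw [div_eq_iff hGone]
          linear_combination e_zw ω
        have expand : tπ * tπ * (Gw ω / (Gv ζ * Go ω)) * ((Gz ω - Gz ζ) / (ω - ζ))
            = (tπ * tπ * (Gv ζ)⁻¹) *
              ((Gw ω * Gz ω / Go ω) / (ω - ζ) - Gz ζ * ((Gw ω / Go ω) * (ω - ζ)⁻¹)) := by
          field_simp
        rw [expand, q1, q2]
      rw [circleIntegral.integral_congr hrω.le key, circleIntegral.integral_const_mul]
      have hi1 : CircleIntegrable (fun ω => G1 ω / (ω - ζ)) cω rω := by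
        refine ContinuousOn.circleIntegrable hrω.le ?_
        refine ContinuousOn.div
          (hG1ω_diff.continuousOn.mono sphere_subset_closedBall) (by fun_prop) ?_
        exact fun x hx => sub_ne_zero.2 (jbb_sphere_ne' hx hζ_out)
      have hi2 : CircleIntegrable
          (fun ω => Gz ζ * ((∏ k ∈ Finset.Icc (n+1) (j-1), (ω - β k)) * (ω - ζ)⁻¹)) cω rω := by
        refine ContinuousOn.circleIntegrable hrω.le
          (ContinuousOn.mul continuousOn_const (ContinuousOn.mul ?_ (ContinuousOn.inv₀ (by fun_prop) ?_)))
        · exact Continuous.continuousOn (continuous_finset_prod _ fun k _ =>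
            (continuous_id.sub continuous_const))
        · exact fun x hx => sub_ne_zero.2 (jbb_sphere_ne' hx hζ_out)
      rw [circleIntegral.integral_sub hi1 hi2]
      have hz1 : (∮ ω in C(cω, rω), G1 ω / (ω - ζ)) = 0 := by
        refine jbb_holo_zero hrω.le (DifferentiableOn.div hG1ω_diff
          ((differentiable_id.sub_const _).differentiableOn) ?_)
        exact fun x hx => sub_ne_zero.2 fun hcon => hζ_out (hcon ▸ hx)
      have hz2 : (∮ ω in C(cω, rω),
          Gz ζ * ((∏ k ∈ Finset.Icc (n+1) (j-1), (ω - β k)) * (ω - ζ)⁻¹)) = 0 := by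
        refine jbb_holo_zero hrω.le (DifferentiableOn.mul (differentiableOn_const _)
          (DifferentiableOn.mul ?_ (DifferentiableOn.inv
            ((differentiable_id.sub_const _).differentiableOn) ?_)))
        · exact DifferentiableOn.fun_finsetProd fun k _ =>
            (differentiable_id.sub_const _).differentiableOn
        · exact fun x hx => sub_ne_zero.2 fun hcon => hζ_out (hcon ▸ hx)
      rw [hz1, hz2]
      ring
    rw [circleIntegral.integral_congr hrζ.le fun ζ hζs => stepO ζ hζs]
    have : (∮ _ζ in C(cζ, rζ), (0 : ℂ)) = 0 := by
      simp [circleIntegral]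
    rw [this, mul_zero, if_neg]
    rintro ⟨rfl, hle⟩
    omega

end
end

section
/- Define N × N matrices A(i,j) = (1/2πi)∮_{γ_b} dζ [∏_{k=1}^{j−1}(ζ − 1/b_k) / ∏_{k=1}^{i}(ζ − 1/b_k)] (b_j ζ)^{1−h} ∏_{k=1}^{m}(1 − a_k/ζ)/(1 − a_k b_j) and B(i,j) = (1/2πi)∮_{γ_b} dω [∏_{k=1}^{j−1}(ω − 1/b_k) / ∏_{k=1}^{i}(ω − 1/b_k)] (b_i ω)^{h−H} ∏_{k=m+1}^{M}(1 − a_k/ω)/(1 − a_k b_i), where γ_b is a simple closed counterclockwise contour encircling all of the points 1/b_1, …, 1/b_N and none of the points 0, a_1, …, a_M. Then A(i,j) = B(i,j) = 0 whenever j > i, and A(i,i) = B(i,i) = 1 for all i; in particular A and B are lower triangular with unit diagonal and det A = det B = 1. -/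
open Complex Metric Finset

lemma zne_of_far {cb z p : ℂ} {rb : ℝ} (hz : z ∈ sphere cb rb)
    (hp : ‖p - cb‖ < rb) : z ≠ p := by
  rintro rfl
  rw [mem_sphere_iff_norm] at hz
  rw [hz] at hp
  exact lt_irrefl _ hp

lemma key_zero (cb : ℂ) (rb : ℝ) (hrb : 0 < rb) (w : ℕ → ℂ)
    (i j : ℕ) (hij : i + 1 ≤ j)
    (hw : ∀ k, 1 ≤ k → k ≤ j → ‖w k - cb‖ < rb)
    (g : ℂ → ℂ)
    (hg : ∀ z ∈ closedBall cb rb, DifferentiableAt ℂ g z) :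
    (∮ ζ in C(cb, rb),
      ((∏ k ∈ Finset.Icc 1 j, (ζ - w k)) / ∏ k ∈ Finset.Icc 1 (i+1), (ζ - w k)) * g ζ) = 0 := by
  have heq : Set.EqOn
      (fun ζ => ((∏ k ∈ Finset.Icc 1 j, (ζ - w k)) / ∏ k ∈ Finset.Icc 1 (i+1), (ζ - w k)) * g ζ)
      (fun ζ => (∏ k ∈ Finset.Ioc (i+1) j, (ζ - w k)) * g ζ) (sphere cb rb) := by
    intro z hz
    have hne : ∀ k ∈ Finset.Icc 1 (i+1), z - w k ≠ 0 := by
      intro k hk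
      rw [Finset.mem_Icc] at hk
      exact sub_ne_zero.2 (zne_of_far hz (hw k hk.1 (hk.2.trans hij)))
    have hsplit : (∏ k ∈ Finset.Icc 1 j, (z - w k))
        = (∏ k ∈ Finset.Icc 1 (i+1), (z - w k)) * ∏ k ∈ Finset.Ioc (i+1) j, (z - w k) := by
      rw [show Finset.Icc 1 j = Finset.Ioc 0 j from (Finset.Icc_add_one_left_eq_Ioc 0 j),
        show Finset.Icc 1 (i+1) = Finset.Ioc 0 (i+1) from (Finset.Icc_add_one_left_eq_Ioc 0 (i+1))]
      exact (Finset.prod_Ioc_consecutive _ (Nat.zero_le _) hij).symm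
    have hP : (∏ k ∈ Finset.Icc 1 (i+1), (z - w k)) ≠ 0 := Finset.prod_ne_zero_iff.2 hne
    simp only [hsplit]
    field_simp
  rw [circleIntegral.integral_congr hrb.le heq]
  refine circleIntegral_eq_zero_of_differentiable_on_off_countable hrb.le
    (Set.countable_empty) ?_ ?_
  · exact fun z hz => ((DifferentiableAt.fun_finsetProd (fun k _ => (differentiableAt_id.sub_const (w k)))).mul (hg z hz)).continuousAt.continuousWithinAt
  · exact fun z hz => (DifferentiableAt.fun_finsetProd (fun k _ => (differentiableAt_id.sub_const (w k)))).mul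
      (hg z (ball_subset_closedBall hz.1))

lemma key_diag (cb : ℂ) (rb : ℝ) (hrb : 0 < rb) (w : ℕ → ℂ) (i : ℕ)
    (hw : ∀ k, 1 ≤ k → k ≤ i+1 → ‖w k - cb‖ < rb)
    (g : ℂ → ℂ)
    (hg : ∀ z ∈ closedBall cb rb, DifferentiableAt ℂ g z) :
    (2 * (Real.pi : ℂ) * Complex.I)⁻¹ *
      (∮ ζ in C(cb, rb),
        ((∏ k ∈ Finset.Icc 1 i, (ζ - w k)) / ∏ k ∈ Finset.Icc 1 (i+1), (ζ - w k)) * g ζ)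
      = g (w (i+1)) := by
  have heq : Set.EqOn
      (fun ζ => ((∏ k ∈ Finset.Icc 1 i, (ζ - w k)) / ∏ k ∈ Finset.Icc 1 (i+1), (ζ - w k)) * g ζ)
      (fun ζ => (ζ - w (i+1))⁻¹ • g ζ) (sphere cb rb) := by
    intro z hz
    have hne : ∀ k ∈ Finset.Icc 1 i, z - w k ≠ 0 := by
      intro k hk
      rw [Finset.mem_Icc] at hk
      exact sub_ne_zero.2 (zne_of_far hz (hw k hk.1 (hk.2.trans (Nat.le_succ i))))
    have hP : (∏ k ∈ Finset.Icc 1 i, (z - w k)) ≠ 0 := Finset.prod_ne_zero_iff.2 hne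
    have htop : (∏ k ∈ Finset.Icc 1 (i+1), (z - w k))
        = (∏ k ∈ Finset.Icc 1 i, (z - w k)) * (z - w (i+1)) :=
      Finset.prod_Icc_succ_top (Nat.one_le_iff_ne_zero.2 (Nat.succ_ne_zero i)) _
    have hlast : z - w (i+1) ≠ 0 :=
      sub_ne_zero.2 (zne_of_far hz (hw (i+1) (Nat.le_add_left 1 i) le_rfl))
    simp only [htop, smul_eq_mul]
    field_simp
  rw [circleIntegral.integral_congr hrb.le heq]
  have := Complex.two_pi_I_inv_smul_circleIntegral_sub_inv_smul_of_differentiable_on_off_countable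
    (Set.countable_empty) (show w (i+1) ∈ ball cb rb by
      rw [mem_ball, Complex.dist_eq]; exact hw (i+1) (Nat.le_add_left 1 i) le_rfl)
    (fun z hz => (hg z hz).continuousAt.continuousWithinAt)
    (fun z hz => hg z (ball_subset_closedBall hz.1))
  rw [← this, smul_eq_mul]

lemma g_diff (c : ℂ) (e : ℤ) (hc : c ≠ 0) (aa : ℕ → ℂ) (s : Finset ℕ) (d : ℕ → ℂ)
    {z : ℂ} (hz : z ≠ 0) :
    DifferentiableAt ℂ (fun ζ => (c * ζ) ^ e * ∏ k ∈ s, ((1 - aa k / ζ) / d k)) z := by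
  refine DifferentiableAt.mul ?_ ?_
  · exact (differentiableAt_id.const_mul c).zpow (Or.inl (mul_ne_zero hc hz))
  · exact DifferentiableAt.fun_finsetProd fun k _ =>
      ((differentiableAt_const _).sub
        ((differentiableAt_const (aa k)).div differentiableAt_id hz)).div_const _

lemma g_val (c : ℂ) (e : ℤ) (hc : c ≠ 0) (aa : ℕ → ℂ) (s : Finset ℕ)
    (hd : ∀ k ∈ s, 1 - aa k * c ≠ 0) :
    (c * c⁻¹) ^ e * ∏ k ∈ s, ((1 - aa k / c⁻¹) / (1 - aa k * c)) = 1 := by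
  rw [mul_inv_cancel₀ hc, one_zpow]
  rw [Finset.prod_congr rfl (fun k hk => by
    rw [div_inv_eq_mul, div_self (hd k hk)]), Finset.prod_const_one, mul_one]

/-- The orthogonalizing matrices `A` and `B` are lower triangular with unit diagonal,
hence have determinant 1. -/
theorem orthogonalizing_matrices_triangular
    (N M : ℕ) (hN : 1 ≤ N) (hM : 1 ≤ M)
    (m : ℕ) (hm : 0 < m) (hmM : m < M)
    (h H : ℤ)
    (a b : ℕ → ℝ)
    (ha : ∀ i, 1 ≤ i → i ≤ M → 0 ≤ a i ∧ a i ≤ 1)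
    (hb : ∀ j, 1 ≤ j → j ≤ N → 0 < b j ∧ b j ≤ 1)
    (hab : ∀ i j, 1 ≤ i → i ≤ M → 1 ≤ j → j ≤ N → 0 < a i * b j ∧ a i * b j < 1)
    -- the contour `γ_b`: a circle of center `cb` and radius `rb` encircling all points
    -- `1/b_k` and none of the points `0, a_1, …, a_M`
    (cb : ℂ) (rb : ℝ) (hrb : 0 < rb)
    (hγb_in : ∀ k, 1 ≤ k → k ≤ N → ‖((b k : ℂ))⁻¹ - cb‖ < rb)
    (hγb_out0 : rb < ‖cb‖)
    (hγb_outa : ∀ k, 1 ≤ k → k ≤ M → rb < ‖(a k : ℂ) - cb‖) :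
    ∀ A B : Matrix (Fin N) (Fin N) ℂ,
      (A = Matrix.of fun i j : Fin N =>
        (2 * (Real.pi : ℂ) * Complex.I)⁻¹ *
          ∮ ζ in C(cb, rb),
            ((∏ k ∈ Finset.Icc 1 j.1, (ζ - ((b k : ℂ))⁻¹))
                / ∏ k ∈ Finset.Icc 1 (i.1 + 1), (ζ - ((b k : ℂ))⁻¹))
              * ((b (j.1 + 1) : ℂ) * ζ) ^ (1 - h)
              * ∏ k ∈ Finset.Icc 1 m,
                  ((1 - (a k : ℂ) / ζ) / (1 - (a k : ℂ) * (b (j.1 + 1) : ℂ)))) →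
      (B = Matrix.of fun i j : Fin N =>
        (2 * (Real.pi : ℂ) * Complex.I)⁻¹ *
          ∮ ω in C(cb, rb),
            ((∏ k ∈ Finset.Icc 1 j.1, (ω - ((b k : ℂ))⁻¹))
                / ∏ k ∈ Finset.Icc 1 (i.1 + 1), (ω - ((b k : ℂ))⁻¹))
              * ((b (i.1 + 1) : ℂ) * ω) ^ (h - H)
              * ∏ k ∈ Finset.Icc (m + 1) M,
                  ((1 - (a k : ℂ) / ω) / (1 - (a k : ℂ) * (b (i.1 + 1) : ℂ)))) →
      ((∀ i j : Fin N, i < j → A i j = 0) ∧ (∀ i : Fin N, A i i = 1)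
        ∧ (∀ i j : Fin N, i < j → B i j = 0) ∧ (∀ i : Fin N, B i i = 1)
        ∧ Matrix.det A = 1 ∧ Matrix.det B = 1) := by
  intro A B hA hB
  -- basic facts
  have hz0 : ∀ z ∈ closedBall cb rb, z ≠ (0:ℂ) := by
    intro z hzb hz
    subst hz
    rw [mem_closedBall, Complex.dist_eq, zero_sub, norm_neg] at hzb
    exact absurd hγb_out0 (not_lt.2 hzb)
  have hbpos : ∀ j : Fin N, (0:ℝ) < b (j.1 + 1) :=
    fun j => (hb (j.1+1) (Nat.le_add_left 1 j.1) j.2).1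
  have hbne : ∀ j : Fin N, ((b (j.1+1) : ℝ) : ℂ) ≠ 0 :=
    fun j => Complex.ofReal_ne_zero.2 (ne_of_gt (hbpos j))
  have habne : ∀ (k : ℕ), 1 ≤ k → k ≤ M → ∀ (j : Fin N),
      (1 : ℂ) - (a k : ℂ) * (b (j.1+1) : ℂ) ≠ 0 := by
    intro k hk1 hkM j hcon
    have h1 : a k * b (j.1+1) < 1 := (hab k (j.1+1) hk1 hkM (Nat.le_add_left 1 j.1) j.2).2
    have h2 : ((a k * b (j.1+1) : ℝ) : ℂ) = 1 := by
      push_cast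
      exact (sub_eq_zero.mp hcon).symm
    rw [Complex.ofReal_eq_one] at h2
    exact absurd h2 (ne_of_lt h1)
  have hAzero : ∀ i j : Fin N, i < j → A i j = 0 := by
    intro i j hij
    have h0 := key_zero cb rb hrb (fun k => ((b k : ℂ))⁻¹) i.1 j.1 hij
      (fun k hk1 hkj => hγb_in k hk1 (hkj.trans j.2.le))
      (fun ζ => ((b (j.1 + 1) : ℂ) * ζ) ^ (1 - h)
        * ∏ k ∈ Finset.Icc 1 m, ((1 - (a k : ℂ) / ζ) / (1 - (a k : ℂ) * (b (j.1 + 1) : ℂ))))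
      (fun z hzb => g_diff _ _ (hbne j) _ _ _ (hz0 z hzb))
    rw [hA]
    simp only [Matrix.of_apply, mul_assoc]
    rw [h0, mul_zero]
  have hAdiag : ∀ i : Fin N, A i i = 1 := by
    intro i
    have h1 := key_diag cb rb hrb (fun k => ((b k : ℂ))⁻¹) i.1
      (fun k hk1 hki => hγb_in k hk1 (hki.trans i.2))
      (fun ζ => ((b (i.1 + 1) : ℂ) * ζ) ^ (1 - h)
        * ∏ k ∈ Finset.Icc 1 m, ((1 - (a k : ℂ) / ζ) / (1 - (a k : ℂ) * (b (i.1 + 1) : ℂ))))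
      (fun z hzb => g_diff _ _ (hbne i) _ _ _ (hz0 z hzb))
    beta_reduce at h1
    rw [g_val _ (1 - h) (hbne i) _ _
      (fun k hk => habne k (Finset.mem_Icc.mp hk).1 ((Finset.mem_Icc.mp hk).2.trans hmM.le) i)] at h1
    rw [hA]
    simp only [Matrix.of_apply, mul_assoc]
    rw [mul_assoc 2] at h1
    exact h1
  have hBzero : ∀ i j : Fin N, i < j → B i j = 0 := by
    intro i j hij
    have h0 := key_zero cb rb hrb (fun k => ((b k : ℂ))⁻¹) i.1 j.1 hij
      (fun k hk1 hkj => hγb_in k hk1 (hkj.trans j.2.le))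
      (fun ω => ((b (i.1 + 1) : ℂ) * ω) ^ (h - H)
        * ∏ k ∈ Finset.Icc (m + 1) M, ((1 - (a k : ℂ) / ω) / (1 - (a k : ℂ) * (b (i.1 + 1) : ℂ))))
      (fun z hzb => g_diff _ _ (hbne i) _ _ _ (hz0 z hzb))
    rw [hB]
    simp only [Matrix.of_apply, mul_assoc]
    rw [h0, mul_zero]
  have hBdiag : ∀ i : Fin N, B i i = 1 := by
    intro i
    have h1 := key_diag cb rb hrb (fun k => ((b k : ℂ))⁻¹) i.1
      (fun k hk1 hki => hγb_in k hk1 (hki.trans i.2))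
      (fun ω => ((b (i.1 + 1) : ℂ) * ω) ^ (h - H)
        * ∏ k ∈ Finset.Icc (m + 1) M, ((1 - (a k : ℂ) / ω) / (1 - (a k : ℂ) * (b (i.1 + 1) : ℂ))))
      (fun z hzb => g_diff _ _ (hbne i) _ _ _ (hz0 z hzb))
    beta_reduce at h1
    rw [g_val _ (h - H) (hbne i) _ _
      (fun k hk => habne k ((Nat.le_add_left 1 m).trans (Finset.mem_Icc.mp hk).1)
        (Finset.mem_Icc.mp hk).2 i)] at h1
    rw [hB]
    simp only [Matrix.of_apply, mul_assoc]
    rw [mul_assoc 2] at h1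
    exact h1
  have hdetA : Matrix.det A = 1 := by
    rw [Matrix.det_of_lowerTriangular A
      (fun i j hlt => hAzero i j hlt)]
    simp [hAdiag]
  have hdetB : Matrix.det B = 1 := by
    rw [Matrix.det_of_lowerTriangular B
      (fun i j hlt => hBzero i j hlt)]
    simp [hBdiag]
  exact ⟨hAzero, hAdiag, hBzero, hBdiag, hdetA, hdetB⟩
end
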